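/- arXiv:math/0211068 — 2 statements merged into one kernel-verified Lean document; each statement's English description precedes it below -/
import Mathlib

section
/- Let u and v be 1-cocycles on Γ in Aut_S(g(S)). Then g(S)_u and g(S)_v are isomorphic as Lie algebras over R if and only if u and v are cohomologous, i.e. if and only if there exists f ∈ Aut_S(g(S)) such that v_ī = f⁻¹ ∘ u_ī ∘ ⁱf for all ī ∈ Γ. -/
open scoped TensorProduct
open LaurentPolynomial

set_option maxHeartbeats 1000000
set_option synthInstance.maxHeartbeats 400000

noncomputable section

namespace LoopPaper

variable {k : Type*} [Field k] {g : Type*} [LieRing g] [LieAlgebra k g]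

/-- A linear automorphism of a Lie algebra is a Lie algebra automorphism if it
preserves brackets. -/
def IsLieAut (σ : g ≃ₗ[k] g) : Prop := ∀ x y : g, σ ⁅x, y⁆ = ⁅σ x, σ y⁆

theorem IsLieAut.one : IsLieAut (1 : g ≃ₗ[k] g) := fun _ _ => rfl

theorem IsLieAut.mul {σ τ : g ≃ₗ[k] g} (hσ : IsLieAut σ) (hτ : IsLieAut τ) :
    IsLieAut (σ * τ) := fun x y => by
  show σ (τ ⁅x, y⁆) = ⁅σ (τ x), σ (τ y)⁆
  rw [hτ, hσ]

theorem IsLieAut.inv {σ : g ≃ₗ[k] g} (hσ : IsLieAut σ) : IsLieAut σ⁻¹ := fun x y => by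
  apply σ.injective
  have h1 : ∀ z, σ (σ⁻¹ z) = z := fun z => σ.apply_symm_apply z
  rw [h1, hσ, h1, h1]

/-! ### The variable-scaling automorphism `z ↦ c z` of `k[z,z⁻¹]` -/

/-- The unit `c^n • z^n` of the Laurent polynomial ring. -/
def scaleUnit (c : kˣ) (n : ℤ) : (LaurentPolynomial k)ˣ where
  val := ((c ^ n : kˣ) : k) • T n
  inv := ((c ^ (-n) : kˣ) : k) • T (-n)
  val_inv := by
    rw [smul_mul_smul_comm, ← T_add, ← Units.val_mul, ← zpow_add, add_neg_cancel, zpow_zero,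
      Units.val_one, T_zero, one_smul]
  inv_val := by
    rw [smul_mul_smul_comm, ← T_add, ← Units.val_mul, ← zpow_add, neg_add_cancel, zpow_zero,
      Units.val_one, T_zero, one_smul]

/-- The homomorphism `n ↦ c^n • z^n` from `ℤ` to the units of `k[z,z⁻¹]`. -/
def scaleUnitHom (c : kˣ) : Multiplicative ℤ →* (LaurentPolynomial k)ˣ where
  toFun n := scaleUnit c n.toAdd
  map_one' := Units.ext (by
    show ((c ^ (0 : ℤ) : kˣ) : k) • T (0 : ℤ) = 1
    rw [zpow_zero, Units.val_one, T_zero, one_smul])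
  map_mul' a b := Units.ext (by
    show ((c ^ (a.toAdd + b.toAdd) : kˣ) : k) • T (a.toAdd + b.toAdd) =
      (((c ^ a.toAdd : kˣ) : k) • T a.toAdd) * (((c ^ b.toAdd : kˣ) : k) • T b.toAdd)
    rw [smul_mul_smul_comm, ← T_add, ← Units.val_mul, ← zpow_add])

/-- The `k`-algebra endomorphism of `k[z,z⁻¹]` with `z ↦ c z`. -/
def scaleVar (c : kˣ) : LaurentPolynomial k →ₐ[k] LaurentPolynomial k :=
  AddMonoidAlgebra.lift k _ ℤ ((Units.coeHom _).comp (scaleUnitHom c))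

theorem scaleVar_T (c : kˣ) (n : ℤ) : scaleVar c (T n) = ((c ^ n : kˣ) : k) • T n := by
  have h : (T n : LaurentPolynomial k) = AddMonoidAlgebra.of k ℤ (Multiplicative.ofAdd n) := rfl
  rw [h, scaleVar, AddMonoidAlgebra.lift_of]
  rfl

theorem scaleVar_comp (c d : kˣ) :
    (scaleVar c).comp (scaleVar d) = scaleVar (k := k) (c * d) := by
  apply AddMonoidAlgebra.algHom_ext
  intro n
  have hT : (AddMonoidAlgebra.single n 1 : LaurentPolynomial k) = T n := rfl
  simp only [AlgHom.coe_comp, Function.comp_apply, hT]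
  rw [scaleVar_T, map_smul, scaleVar_T, smul_smul, scaleVar_T]
  congr 1
  rw [mul_zpow, Units.val_mul, mul_comm]
  exact Subsingleton.elim _ _

theorem scaleVar_id : scaleVar (1 : kˣ) = AlgHom.id k (LaurentPolynomial k) := by
  apply AddMonoidAlgebra.algHom_ext
  intro n
  have hT : (AddMonoidAlgebra.single n 1 : LaurentPolynomial k) = T n := rfl
  simp only [hT, AlgHom.coe_id, id_eq]
  rw [scaleVar_T, one_zpow, Units.val_one, one_smul]
  exact Subsingleton.elim _ _

/-- The `k`-algebra automorphism of `k[z,z⁻¹]` with `z ↦ c z`. -/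
def scaleVarEquiv (c : kˣ) : LaurentPolynomial k ≃ₐ[k] LaurentPolynomial k :=
  AlgEquiv.ofAlgHom (scaleVar c) (scaleVar c⁻¹)
    (by rw [scaleVar_comp, mul_inv_cancel, scaleVar_id])
    (by rw [scaleVar_comp, inv_mul_cancel, scaleVar_id])

theorem scaleVarEquiv_apply (c : kˣ) (p : LaurentPolynomial k) :
    scaleVarEquiv c p = scaleVar c p := rfl


/-- `R = k[t,t⁻¹]`, identified with the `k`-subalgebra of `S = k[z,z⁻¹]` generated by
`t = z^m` and `t⁻¹ = z^{-m}`. -/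
def Rsub (k : Type*) [Field k] (m : ℕ) : Subalgebra k (LaurentPolynomial k) :=
  Algebra.adjoin k {T (m : ℤ), T (-(m : ℤ))}

/-- `g(S) = g ⊗_k S` is a Lie algebra over `k` (by restriction from `S`). -/
instance instLieAlgebraTensorBase : LieAlgebra k (LaurentPolynomial k ⊗[k] g) where
  lie_smul c x y := by
    have h := lie_smul (algebraMap k (LaurentPolynomial k) c) x y
    rwa [algebraMap_smul, algebraMap_smul] at h

/-- The underlying submodule `⊕_{i ∈ ℤ} g_ī ⊗ z^i` of the loop algebra. -/
def loopCarrier (ζ : k) (σ : g ≃ₗ[k] g) : Submodule k (LaurentPolynomial k ⊗[k] g) :=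
  Submodule.span k {p | ∃ (i : ℤ) (x : g), σ x = ζ ^ i • x ∧ p = T i ⊗ₜ[k] x}

theorem loop_lie_mem {ζ : k} (hζ0 : ζ ≠ 0) {σ : g ≃ₗ[k] g} (hbr : IsLieAut σ)
    {x y : LaurentPolynomial k ⊗[k] g} (hx : x ∈ loopCarrier ζ σ) (hy : y ∈ loopCarrier ζ σ) :
    ⁅x, y⁆ ∈ loopCarrier ζ σ := by
  have key : ∀ p ∈ {p : LaurentPolynomial k ⊗[k] g |
      ∃ (i : ℤ) (x : g), σ x = ζ ^ i • x ∧ p = T i ⊗ₜ[k] x},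
      ∀ q, q ∈ loopCarrier ζ σ → ⁅p, q⁆ ∈ loopCarrier ζ σ := by
    rintro p ⟨i, a, ha, rfl⟩ q hq
    unfold loopCarrier at hq ⊢
    induction hq using Submodule.span_induction with
    | mem q hq =>
      obtain ⟨j, b, hb, rfl⟩ := hq
      rw [LieAlgebra.ExtendScalars.bracket_tmul, ← T_add]
      refine Submodule.subset_span ⟨i + j, ⁅a, b⁆, ?_, rfl⟩
      rw [hbr, ha, hb, smul_lie, lie_smul, smul_smul, ← zpow_add₀ hζ0]
    | zero =>
      have h0 : ⁅(T i ⊗ₜ[k] a : LaurentPolynomial k ⊗[k] g), (0 : LaurentPolynomial k ⊗[k] g)⁆ = 0 :=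
        lie_zero (T i ⊗ₜ[k] a : LaurentPolynomial k ⊗[k] g)
      rw [h0]; exact zero_mem _
    | add q r _ _ hq hr =>
      have h0 : ⁅(T i ⊗ₜ[k] a : LaurentPolynomial k ⊗[k] g), q + r⁆ = ⁅T i ⊗ₜ[k] a, q⁆ + ⁅T i ⊗ₜ[k] a, r⁆ :=
        lie_add (T i ⊗ₜ[k] a : LaurentPolynomial k ⊗[k] g) q r
      rw [h0]; exact add_mem hq hr
    | smul c q _ hq =>
      have h0 : ⁅(T i ⊗ₜ[k] a : LaurentPolynomial k ⊗[k] g), c • q⁆ = c • ⁅T i ⊗ₜ[k] a, q⁆ :=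
        lie_smul c (T i ⊗ₜ[k] a : LaurentPolynomial k ⊗[k] g) q
      rw [h0]; exact Submodule.smul_mem _ _ hq
  unfold loopCarrier at hx
  induction hx using Submodule.span_induction with
  | mem p hp => exact key p hp y hy
  | zero =>
    have h0 : ⁅(0 : LaurentPolynomial k ⊗[k] g), y⁆ = 0 := zero_lie y
    rw [h0]; exact zero_mem _
  | add p r _ _ hp hr =>
    have h0 : ⁅p + r, y⁆ = ⁅p, y⁆ + ⁅r, y⁆ := add_lie p r y
    rw [h0]; exact add_mem hp hr
  | smul c p _ hp =>
    have h0 : ⁅c • p, y⁆ = c • ⁅p, y⁆ := smul_lie c p y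
    rw [h0]; exact Submodule.smul_mem _ _ hp

/-- The loop algebra `L(g,σ) = ⊕_{i ∈ ℤ} g_ī ⊗ z^i`, a Lie subalgebra (over `k`)
of `g(S) = g ⊗_k S`.  Here `m` is a period of `σ` and `ζ` is the chosen root of unity. -/
def loopAlgebra (m : ℕ) (ζ : k) (hζ0 : ζ ≠ 0) (hζm : ζ ^ m = 1) (σ : g ≃ₗ[k] g)
    (hbr : IsLieAut σ) (hσ : σ ^ m = 1) : LieSubalgebra k (LaurentPolynomial k ⊗[k] g) where
  __ := loopCarrier ζ σ
  lie_mem' := fun hx hy => loop_lie_mem hζ0 hbr hx hy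

theorem mem_loopAlgebra_iff {m : ℕ} {ζ : k} {hζ0 : ζ ≠ 0} {hζm : ζ ^ m = 1} {σ : g ≃ₗ[k] g}
    {hbr : IsLieAut σ} {hσ : σ ^ m = 1} {x : LaurentPolynomial k ⊗[k] g} :
    x ∈ loopAlgebra m ζ hζ0 hζm σ hbr hσ ↔ x ∈ loopCarrier ζ σ := Iff.rfl

theorem T_smul_loop {ζ : k} (hζ0 : ζ ≠ 0) {σ : g ≃ₗ[k] g} {j : ℤ} (hj : ζ ^ j = 1)
    {x : LaurentPolynomial k ⊗[k] g} (hx : x ∈ loopCarrier ζ σ) :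
    (T j : LaurentPolynomial k) • x ∈ loopCarrier ζ σ := by
  unfold loopCarrier at hx ⊢
  induction hx using Submodule.span_induction with
  | mem p hp =>
    obtain ⟨i, a, ha, rfl⟩ := hp
    rw [TensorProduct.smul_tmul', smul_eq_mul, ← T_add]
    refine Submodule.subset_span ⟨j + i, a, ?_, rfl⟩
    rw [ha, zpow_add₀ hζ0, hj, one_mul]
  | zero => rw [smul_zero]; exact zero_mem _
  | add p q _ _ hp hq => rw [smul_add]; exact add_mem hp hq
  | smul c p _ hp =>
    rw [smul_comm]
    exact Submodule.smul_mem _ _ hp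

theorem Rsub_smul_loop {m : ℕ} {ζ : k} (hζ0 : ζ ≠ 0) (hζm : ζ ^ m = 1) {σ : g ≃ₗ[k] g}
    {r : LaurentPolynomial k} (hr : r ∈ Rsub k m) :
    ∀ x ∈ loopCarrier ζ σ, r • x ∈ loopCarrier (g := g) ζ σ := by
  induction hr using Algebra.adjoin_induction with
  | mem s hs =>
    intro x hx
    rcases hs with rfl | rfl
    · refine T_smul_loop hζ0 ?_ hx
      rw [zpow_natCast, hζm]
    · refine T_smul_loop hζ0 ?_ hx
      rw [zpow_neg, zpow_natCast, hζm, inv_one]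
  | algebraMap c =>
    intro x hx
    rw [algebraMap_smul]
    exact Submodule.smul_mem _ _ hx
  | add r s _ _ hr hs =>
    intro x hx
    rw [add_smul]
    exact add_mem (hr x hx) (hs x hx)
  | mul r s _ _ hr hs =>
    intro x hx
    rw [mul_smul]
    exact hr _ (hs x hx)


/-- The action of `R` on the loop algebra. -/
instance loopSMulR {m : ℕ} {ζ : k} {hζ0 : ζ ≠ 0} {hζm : ζ ^ m = 1} {σ : g ≃ₗ[k] g}
    {hbr : IsLieAut σ} {hσ : σ ^ m = 1} :
    SMul ↥(Rsub k m) ↥(loopAlgebra m ζ hζ0 hζm σ hbr hσ) where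
  smul r x := ⟨(r : LaurentPolynomial k) • (x : LaurentPolynomial k ⊗[k] g),
    Rsub_smul_loop hζ0 hζm r.2 _ x.2⟩

theorem loop_smul_coe {m : ℕ} {ζ : k} {hζ0 : ζ ≠ 0} {hζm : ζ ^ m = 1} {σ : g ≃ₗ[k] g}
    {hbr : IsLieAut σ} {hσ : σ ^ m = 1} (r : ↥(Rsub k m))
    (x : ↥(loopAlgebra m ζ hζ0 hζm σ hbr hσ)) :
    ((r • x : ↥(loopAlgebra m ζ hζ0 hζm σ hbr hσ)) : LaurentPolynomial k ⊗[k] g)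
      = (r : LaurentPolynomial k) • (x : LaurentPolynomial k ⊗[k] g) := rfl

/-- The loop algebra is a module over `R = k[t,t⁻¹] ⊆ k[z,z⁻¹]`. -/
instance loopModuleR {m : ℕ} {ζ : k} {hζ0 : ζ ≠ 0} {hζm : ζ ^ m = 1} {σ : g ≃ₗ[k] g}
    {hbr : IsLieAut σ} {hσ : σ ^ m = 1} :
    Module ↥(Rsub k m) ↥(loopAlgebra m ζ hζ0 hζm σ hbr hσ) where
  one_smul x := Subtype.ext (by simp [loop_smul_coe])
  mul_smul r s x := Subtype.ext (by simp [loop_smul_coe, mul_smul])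
  smul_zero r := Subtype.ext (by simp [loop_smul_coe])
  smul_add r x y := Subtype.ext (by simp [loop_smul_coe, smul_add])
  add_smul r s x := Subtype.ext (by simp [loop_smul_coe, add_smul])
  zero_smul x := Subtype.ext (by simp [loop_smul_coe])


/-- The inclusion of the loop algebra in `g(S)`, as an `R`-linear map. -/
def loopIncl (m : ℕ) (ζ : k) (hζ0 : ζ ≠ 0) (hζm : ζ ^ m = 1) (σ : g ≃ₗ[k] g)
    (hbr : IsLieAut σ) (hσ : σ ^ m = 1) :
    ↥(loopAlgebra m ζ hζ0 hζm σ hbr hσ) →ₗ[↥(Rsub k m)] (LaurentPolynomial k ⊗[k] g) where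
  toFun x := ↑x
  map_add' _ _ := rfl
  map_smul' _ _ := rfl

/-- The eigenspace `{x ∈ g : σ(x) = c x}`. -/
def eigSpace (σ : g ≃ₗ[k] g) (c : k) : Submodule k g where
  carrier := {x | σ x = c • x}
  add_mem' := by
    intro x y hx hy
    show σ (x + y) = c • (x + y)
    rw [map_add, hx, hy, smul_add]
  zero_mem' := by
    show σ 0 = c • (0 : g)
    rw [map_zero, smul_zero]
  smul_mem' := by
    intro t x hx
    show σ (t • x) = c • t • x
    rw [map_smul, hx, smul_comm]

/-- The `R`-algebra automorphism `id ⊗ ι_i` of `g(S)`, where `ι_i(z) = ζ^i z`. -/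
def idTensorIota (ζ : k) (hζ0 : ζ ≠ 0) (i : ℤ) :
    (LaurentPolynomial k ⊗[k] g) ≃ₗ[k] (LaurentPolynomial k ⊗[k] g) :=
  TensorProduct.congr (scaleVarEquiv (Units.mk0 ζ hζ0 ^ i)).toLinearEquiv (LinearEquiv.refl k g)

/-- A `k`-linear automorphism of `g(S)` lies in `Aut_S(g(S))` if it is `S`-linear and
preserves brackets. -/
def IsSAut (f : (LaurentPolynomial k ⊗[k] g) ≃ₗ[k] (LaurentPolynomial k ⊗[k] g)) : Prop :=
  (∀ (s : LaurentPolynomial k) (x : LaurentPolynomial k ⊗[k] g), f (s • x) = s • f x) ∧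
    ∀ x y : LaurentPolynomial k ⊗[k] g, f ⁅x, y⁆ = ⁅f x, f y⁆

/-- The action of `ī ∈ Γ = ℤ/mℤ` on `Aut_S(g(S))`:  `ⁱτ = (id ⊗ ι_i) ∘ τ ∘ (id ⊗ ι_i)⁻¹`. -/
def gammaAct (ζ : k) (hζ0 : ζ ≠ 0) (i : ℤ)
    (τ : (LaurentPolynomial k ⊗[k] g) ≃ₗ[k] (LaurentPolynomial k ⊗[k] g)) :
    (LaurentPolynomial k ⊗[k] g) ≃ₗ[k] (LaurentPolynomial k ⊗[k] g) :=
  ((idTensorIota (g := g) ζ hζ0 i).symm.trans τ).trans (idTensorIota ζ hζ0 i)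

/-- A family `u_ī`, `ī ∈ Γ = ℤ/mℤ` (presented as a function on integer representatives),
is a 1-cocycle on `Γ` in `Aut_S(g(S))` if each `u_i` is an `S`-algebra automorphism,
`u_i` depends only on `i` mod `m`, and `u_{i+j} = u_i ∘ ⁱ(u_j)`. -/
def IsCocycle (m : ℕ) (ζ : k) (hζ0 : ζ ≠ 0)
    (u : ℤ → ((LaurentPolynomial k ⊗[k] g) ≃ₗ[k] (LaurentPolynomial k ⊗[k] g))) : Prop :=
  (∀ i : ℤ, IsSAut (u i)) ∧ (∀ i j : ℤ, (i : ZMod m) = (j : ZMod m) → u i = u j) ∧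
    ∀ i j : ℤ, u (i + j) = (gammaAct ζ hζ0 i (u j)).trans (u i)

/-- The fixed point set `g(S)_u = {x : (u_ī ∘ (id ⊗ ι_i)) x = x for all ī}` of a 1-cocycle. -/
def cocycleFixed (ζ : k) (hζ0 : ζ ≠ 0)
    (u : ℤ → ((LaurentPolynomial k ⊗[k] g) ≃ₗ[k] (LaurentPolynomial k ⊗[k] g))) :
    Set (LaurentPolynomial k ⊗[k] g) :=
  {x | ∀ i : ℤ, u i (idTensorIota ζ hζ0 i x) = x}


section Aux

variable {k : Type*} [Field k] {g : Type*} [LieRing g] [LieAlgebra k g]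

theorem scaleVarEquiv_T' (c : kˣ) (n : ℤ) :
    scaleVarEquiv c (T n) = ((c ^ n : kˣ) : k) • T n := scaleVar_T c n

theorem scaleVarEquiv_scaleVarEquiv (c d : kˣ) (p : LaurentPolynomial k) :
    scaleVarEquiv c (scaleVarEquiv d p) = scaleVarEquiv (c * d) p := by
  have := congrArg (fun φ : LaurentPolynomial k →ₐ[k] LaurentPolynomial k => φ p)
    (scaleVar_comp c d)
  simpa [scaleVarEquiv_apply] using this

theorem scaleVarEquiv_one' (p : LaurentPolynomial k) : scaleVarEquiv (1 : kˣ) p = p := by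
  rw [scaleVarEquiv_apply, scaleVar_id]; rfl

theorem idTensorIota_tmul (ζ : k) (hζ0 : ζ ≠ 0) (i : ℤ) (s : LaurentPolynomial k) (a : g) :
    idTensorIota ζ hζ0 i (s ⊗ₜ[k] a)
      = (scaleVarEquiv (Units.mk0 ζ hζ0 ^ i) s) ⊗ₜ[k] a := rfl

theorem idTensorIota_smul (ζ : k) (hζ0 : ζ ≠ 0) (i : ℤ) (s : LaurentPolynomial k)
    (x : LaurentPolynomial k ⊗[k] g) :
    idTensorIota ζ hζ0 i (s • x)
      = (scaleVarEquiv (Units.mk0 ζ hζ0 ^ i) s) • idTensorIota ζ hζ0 i x := by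
  induction x using TensorProduct.induction_on with
  | zero => simp
  | tmul t a =>
      rw [TensorProduct.smul_tmul', idTensorIota_tmul, idTensorIota_tmul,
        TensorProduct.smul_tmul']
      simp [smul_eq_mul, map_mul]
  | add y z hy hz => rw [smul_add, map_add, map_add, smul_add, hy, hz]

theorem idTensorIota_lie (ζ : k) (hζ0 : ζ ≠ 0) (i : ℤ)
    (x y : LaurentPolynomial k ⊗[k] g) :
    idTensorIota ζ hζ0 i ⁅x, y⁆ = ⁅idTensorIota ζ hζ0 i x, idTensorIota ζ hζ0 i y⁆ := by
  induction x using TensorProduct.induction_on with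
  | zero =>
      have h0 : ⁅(0 : LaurentPolynomial k ⊗[k] g), y⁆ = 0 := zero_lie y
      have h1 : ⁅(0 : LaurentPolynomial k ⊗[k] g), idTensorIota ζ hζ0 i y⁆ = 0 :=
        zero_lie (idTensorIota ζ hζ0 i y)
      rw [h0, map_zero, h1]
  | tmul s a =>
      induction y using TensorProduct.induction_on with
      | zero =>
          have h0 : ⁅(s ⊗ₜ[k] a : LaurentPolynomial k ⊗[k] g), (0 : LaurentPolynomial k ⊗[k] g)⁆ = 0 := lie_zero (s ⊗ₜ[k] a : LaurentPolynomial k ⊗[k] g)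
          have h1 : ⁅idTensorIota ζ hζ0 i (s ⊗ₜ[k] a), (0 : LaurentPolynomial k ⊗[k] g)⁆ = 0 := lie_zero (idTensorIota ζ hζ0 i (s ⊗ₜ[k] a))
          rw [h0, map_zero, h1]
      | tmul t b =>
          rw [LieAlgebra.ExtendScalars.bracket_tmul, idTensorIota_tmul, idTensorIota_tmul,
            idTensorIota_tmul, LieAlgebra.ExtendScalars.bracket_tmul, map_mul]
      | add y z hy hz =>
          have h0 : ⁅(s ⊗ₜ[k] a : LaurentPolynomial k ⊗[k] g), y + z⁆
              = ⁅(s ⊗ₜ[k] a : LaurentPolynomial k ⊗[k] g), y⁆ + ⁅(s ⊗ₜ[k] a : LaurentPolynomial k ⊗[k] g), z⁆ := lie_add (s ⊗ₜ[k] a : LaurentPolynomial k ⊗[k] g) y z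
          have h1 : ⁅idTensorIota ζ hζ0 i (s ⊗ₜ[k] a), idTensorIota ζ hζ0 i y + idTensorIota ζ hζ0 i z⁆
              = ⁅idTensorIota ζ hζ0 i (s ⊗ₜ[k] a), idTensorIota ζ hζ0 i y⁆ + ⁅idTensorIota ζ hζ0 i (s ⊗ₜ[k] a), idTensorIota ζ hζ0 i z⁆ := lie_add (idTensorIota ζ hζ0 i (s ⊗ₜ[k] a)) (idTensorIota ζ hζ0 i y) (idTensorIota ζ hζ0 i z)
          rw [h0, map_add, map_add, h1, hy, hz]
  | add x' z hx hz =>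
      have h0 : ⁅x' + z, y⁆ = ⁅x', y⁆ + ⁅z, y⁆ := add_lie x' z y
      have h1 : ⁅idTensorIota ζ hζ0 i x' + idTensorIota ζ hζ0 i z, idTensorIota ζ hζ0 i y⁆
          = ⁅idTensorIota ζ hζ0 i x', idTensorIota ζ hζ0 i y⁆ + ⁅idTensorIota ζ hζ0 i z, idTensorIota ζ hζ0 i y⁆ := add_lie (idTensorIota ζ hζ0 i x') (idTensorIota ζ hζ0 i z) (idTensorIota ζ hζ0 i y)
      rw [h0, map_add, map_add, h1, hx, hz]

theorem idTensorIota_comp (ζ : k) (hζ0 : ζ ≠ 0) (i j : ℤ) (x : LaurentPolynomial k ⊗[k] g) :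
    idTensorIota ζ hζ0 i (idTensorIota ζ hζ0 j x) = idTensorIota ζ hζ0 (i + j) x := by
  induction x using TensorProduct.induction_on with
  | zero => simp
  | tmul s a =>
      rw [idTensorIota_tmul, idTensorIota_tmul, idTensorIota_tmul,
        scaleVarEquiv_scaleVarEquiv, ← zpow_add]
  | add y z hy hz => rw [map_add, map_add, map_add, hy, hz]

theorem idTensorIota_zero (ζ : k) (hζ0 : ζ ≠ 0) (x : LaurentPolynomial k ⊗[k] g) :
    idTensorIota ζ hζ0 0 x = x := by
  induction x using TensorProduct.induction_on with
  | zero => simp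
  | tmul s a => rw [idTensorIota_tmul, zpow_zero, scaleVarEquiv_one']
  | add y z hy hz => rw [map_add, hy, hz]

theorem idTensorIota_zero_symm (ζ : k) (hζ0 : ζ ≠ 0) (x : LaurentPolynomial k ⊗[k] g) :
    (idTensorIota (g := g) ζ hζ0 0).symm x = x := by
  apply (idTensorIota (g := g) ζ hζ0 0).injective
  rw [LinearEquiv.apply_symm_apply, idTensorIota_zero]

theorem mk0_pow_m {m : ℕ} {ζ : k} (hζ0 : ζ ≠ 0) (hζm : ζ ^ m = 1) :
    (Units.mk0 ζ hζ0) ^ (m : ℤ) = 1 := by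
  ext
  push_cast
  simpa using hζm

theorem idTensorIota_period {m : ℕ} {ζ : k} (hζ0 : ζ ≠ 0) (hζm : ζ ^ m = 1) (i : ℤ)
    (x : LaurentPolynomial k ⊗[k] g) :
    idTensorIota ζ hζ0 (i + m) x = idTensorIota ζ hζ0 i x := by
  have h : (Units.mk0 ζ hζ0) ^ ((i : ℤ) + m) = (Units.mk0 ζ hζ0) ^ (i : ℤ) := by
    rw [zpow_add, mk0_pow_m hζ0 hζm, mul_one]
  induction x using TensorProduct.induction_on with
  | zero => simp
  | tmul s a => rw [idTensorIota_tmul, idTensorIota_tmul, h]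
  | add y z hy hz => rw [map_add, map_add, hy, hz]

theorem scaleVarEquiv_fixes_Rsub {m : ℕ} {ζ : k} (hζ0 : ζ ≠ 0) (hζm : ζ ^ m = 1) (i : ℤ)
    {r : LaurentPolynomial k} (hr : r ∈ Rsub k m) :
    scaleVarEquiv (Units.mk0 ζ hζ0 ^ i) r = r := by
  have key : ∀ n : ℤ, (Units.mk0 ζ hζ0 ^ i) ^ (n * m) = 1 := by
    intro n
    have h : i * (n * (m : ℤ)) = (m : ℤ) * (i * n) := by ring
    rw [← zpow_mul, h, zpow_mul, mk0_pow_m hζ0 hζm, one_zpow]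
  induction hr using Algebra.adjoin_induction with
  | mem s hs =>
      rcases hs with rfl | rfl
      · rw [scaleVarEquiv_T']
        have := key 1
        rw [one_mul] at this
        rw [this, Units.val_one, one_smul]
      · rw [scaleVarEquiv_T']
        have := key (-1)
        rw [neg_one_mul] at this
        rw [this, Units.val_one, one_smul]
  | algebraMap c => exact AlgEquiv.commutes _ c
  | add a b _ _ ha hb => rw [map_add, ha, hb]
  | mul a b _ _ ha hb => rw [map_mul, ha, hb]

theorem idTensorIota_Rsmul {m : ℕ} {ζ : k} (hζ0 : ζ ≠ 0) (hζm : ζ ^ m = 1) (i : ℤ)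
    {r : LaurentPolynomial k} (hr : r ∈ Rsub k m) (x : LaurentPolynomial k ⊗[k] g) :
    idTensorIota ζ hζ0 i (r • x) = r • idTensorIota ζ hζ0 i x := by
  rw [idTensorIota_smul, scaleVarEquiv_fixes_Rsub hζ0 hζm i hr]

end Aux
section Theta

variable {k : Type*} [Field k] {g : Type*} [LieRing g] [LieAlgebra k g]

/-- The semilinear map `θ_i = u_i ∘ (id ⊗ ι_i)`. -/
def theta (ζ : k) (hζ0 : ζ ≠ 0)
    (u : ℤ → ((LaurentPolynomial k ⊗[k] g) ≃ₗ[k] (LaurentPolynomial k ⊗[k] g))) (i : ℤ) :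
    (LaurentPolynomial k ⊗[k] g) ≃ₗ[k] (LaurentPolynomial k ⊗[k] g) :=
  (idTensorIota ζ hζ0 i).trans (u i)

variable {ζ : k} {hζ0 : ζ ≠ 0}
  {u : ℤ → ((LaurentPolynomial k ⊗[k] g) ≃ₗ[k] (LaurentPolynomial k ⊗[k] g))}

theorem theta_apply (i : ℤ) (x : LaurentPolynomial k ⊗[k] g) :
    theta ζ hζ0 u i x = u i (idTensorIota ζ hζ0 i x) := rfl

theorem mem_cocycleFixed_iff {x : LaurentPolynomial k ⊗[k] g} :
    x ∈ cocycleFixed ζ hζ0 u ↔ ∀ i : ℤ, theta ζ hζ0 u i x = x := Iff.rfl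

variable {m : ℕ}

theorem u_zero_apply (hu : IsCocycle m ζ hζ0 u) (x : LaurentPolynomial k ⊗[k] g) :
    u 0 x = x := by
  have h := congrArg (fun φ : (LaurentPolynomial k ⊗[k] g) ≃ₗ[k] (LaurentPolynomial k ⊗[k] g)
    => φ x) (hu.2.2 0 0)
  rw [add_zero] at h
  simp only [LinearEquiv.trans_apply] at h
  have h3 : gammaAct ζ hζ0 0 (u 0) x = u 0 x := by
    show idTensorIota ζ hζ0 0 (u 0 ((idTensorIota ζ hζ0 0).symm x)) = u 0 x
    rw [idTensorIota_zero_symm, idTensorIota_zero]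
  rw [h3] at h
  exact (u 0).injective h.symm

theorem theta_add (hu : IsCocycle m ζ hζ0 u) (i j : ℤ) (x : LaurentPolynomial k ⊗[k] g) :
    theta ζ hζ0 u (i + j) x = theta ζ hζ0 u i (theta ζ hζ0 u j x) := by
  have h := congrArg (fun φ : (LaurentPolynomial k ⊗[k] g) ≃ₗ[k] (LaurentPolynomial k ⊗[k] g)
    => φ (idTensorIota ζ hζ0 (i + j) x)) (hu.2.2 i j)
  simp only [LinearEquiv.trans_apply] at h
  have hg : gammaAct ζ hζ0 i (u j) (idTensorIota ζ hζ0 (i + j) x)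
      = idTensorIota ζ hζ0 i (u j (idTensorIota ζ hζ0 j x)) := by
    show idTensorIota ζ hζ0 i
        (u j ((idTensorIota ζ hζ0 i).symm (idTensorIota ζ hζ0 (i + j) x))) = _
    congr 2
    apply (idTensorIota (g := g) ζ hζ0 i).injective
    rw [LinearEquiv.apply_symm_apply, idTensorIota_comp]
  rw [hg] at h
  exact h

theorem theta_smul (hu : IsCocycle m ζ hζ0 u) (i : ℤ) (s : LaurentPolynomial k)
    (x : LaurentPolynomial k ⊗[k] g) :
    theta ζ hζ0 u i (s • x)
      = (scaleVarEquiv (Units.mk0 ζ hζ0 ^ i) s) • theta ζ hζ0 u i x := by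
  rw [theta_apply, idTensorIota_smul, (hu.1 i).1, theta_apply]

theorem theta_Rsmul (hu : IsCocycle m ζ hζ0 u) (hζm : ζ ^ m = 1) (i : ℤ)
    {r : LaurentPolynomial k} (hr : r ∈ Rsub k m) (x : LaurentPolynomial k ⊗[k] g) :
    theta ζ hζ0 u i (r • x) = r • theta ζ hζ0 u i x := by
  rw [theta_smul hu, scaleVarEquiv_fixes_Rsub hζ0 hζm i hr]

theorem theta_lie (hu : IsCocycle m ζ hζ0 u) (i : ℤ) (x y : LaurentPolynomial k ⊗[k] g) :
    theta ζ hζ0 u i ⁅x, y⁆ = ⁅theta ζ hζ0 u i x, theta ζ hζ0 u i y⁆ := by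
  rw [theta_apply, idTensorIota_lie, (hu.1 i).2, theta_apply, theta_apply]

theorem theta_period (hu : IsCocycle m ζ hζ0 u) (hζm : ζ ^ m = 1) (i : ℤ)
    (x : LaurentPolynomial k ⊗[k] g) :
    theta ζ hζ0 u (i + m) x = theta ζ hζ0 u i x := by
  have hui : u (i + m) = u i := by
    apply hu.2.1
    push_cast
    simp
  rw [theta_apply, theta_apply, hui, idTensorIota_period hζ0 hζm]

theorem theta_zero (hu : IsCocycle m ζ hζ0 u) (x : LaurentPolynomial k ⊗[k] g) :
    theta ζ hζ0 u 0 x = x := by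
  rw [theta_apply, idTensorIota_zero, u_zero_apply hu]

theorem cocycleFixed_lie (hu : IsCocycle m ζ hζ0 u) {x y : LaurentPolynomial k ⊗[k] g}
    (hx : x ∈ cocycleFixed ζ hζ0 u) (hy : y ∈ cocycleFixed ζ hζ0 u) :
    ⁅x, y⁆ ∈ cocycleFixed ζ hζ0 u := by
  rw [mem_cocycleFixed_iff] at hx hy ⊢
  intro i
  rw [theta_lie hu, hx i, hy i]

/-- The fixed points of a cocycle, as an `R`-submodule. -/
def fixedSubmodule (hu : IsCocycle m ζ hζ0 u) (hζm : ζ ^ m = 1) :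
    Submodule ↥(Rsub k m) (LaurentPolynomial k ⊗[k] g) where
  carrier := cocycleFixed ζ hζ0 u
  add_mem' := by
    intro x y hx hy
    rw [mem_cocycleFixed_iff] at hx hy ⊢
    intro i
    rw [map_add, hx i, hy i]
  zero_mem' := fun i => by
    show theta ζ hζ0 u i 0 = 0
    exact map_zero _
  smul_mem' := by
    intro r x hx
    have hx' : ∀ i : ℤ, theta ζ hζ0 u i x = x := hx
    intro i
    show theta ζ hζ0 u i (r • x) = r • x
    have hrs : (r • x : LaurentPolynomial k ⊗[k] g) = (r : LaurentPolynomial k) • x := rfl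
    rw [hrs, theta_Rsmul hu hζm i r.2, hx' i]

theorem coe_fixedSubmodule (hu : IsCocycle m ζ hζ0 u) (hζm : ζ ^ m = 1) :
    ((fixedSubmodule hu hζm : Submodule ↥(Rsub k m) (LaurentPolynomial k ⊗[k] g)) :
      Set (LaurentPolynomial k ⊗[k] g)) = cocycleFixed ζ hζ0 u := rfl

end Theta

section SumShift

theorem sum_shift {M : Type*} [AddCommGroup M] (m : ℕ) (F : ℤ → M)
    (hF : ∀ i : ℤ, F (i + m) = F i) (j : ℤ) :
    ∑ i ∈ Finset.range m, F (j + i) = ∑ i ∈ Finset.range m, F i := by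
  have step : ∀ j : ℤ, ∑ i ∈ Finset.range m, F ((j + 1) + i)
      = ∑ i ∈ Finset.range m, F (j + i) := by
    intro j
    have h1 : ∑ i ∈ Finset.range m, F ((j + 1) + i)
        = ∑ i ∈ Finset.range m, F (j + ((i : ℕ) + 1 : ℕ)) := by
      refine Finset.sum_congr rfl fun i _ => ?_
      congr 1
      push_cast
      ring
    have A := Finset.sum_range_succ' (fun i : ℕ => F (j + i)) m
    have B := Finset.sum_range_succ (fun i : ℕ => F (j + i)) m
    rw [B] at A
    have hm : F (j + (m : ℤ)) = F (j + ((0 : ℕ) : ℤ)) := by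
      rw [hF j]
      norm_num
    rw [h1]
    have A' : (∑ i ∈ Finset.range m, F (j + ((i : ℕ) + 1 : ℕ))) + F (j + ((0 : ℕ) : ℤ))
        = (∑ i ∈ Finset.range m, F (j + i)) + F (j + ((0 : ℕ) : ℤ)) := by
      rw [hm] at A
      exact A.symm
    exact add_right_cancel A'
  induction j using Int.induction_on with
  | zero => refine Finset.sum_congr rfl fun i _ => ?_; rw [zero_add]
  | succ n ih => rw [step n, ih]
  | pred n ih =>
      have := step (-(n : ℤ) - 1)
      rw [sub_add_cancel] at this
      exact this.symm.trans ih

end SumShift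

section Avg

variable {k : Type*} [Field k] {g : Type*} [LieRing g] [LieAlgebra k g]

/-- The averaging (Reynolds) operator onto the fixed points. -/
def avg (m : ℕ) (ζ : k) (hζ0 : ζ ≠ 0)
    (u : ℤ → ((LaurentPolynomial k ⊗[k] g) ≃ₗ[k] (LaurentPolynomial k ⊗[k] g)))
    (x : LaurentPolynomial k ⊗[k] g) : LaurentPolynomial k ⊗[k] g :=
  (m : k)⁻¹ • ∑ i ∈ Finset.range m, theta ζ hζ0 u i x

variable {m : ℕ} {ζ : k} {hζ0 : ζ ≠ 0}
  {u : ℤ → ((LaurentPolynomial k ⊗[k] g) ≃ₗ[k] (LaurentPolynomial k ⊗[k] g))}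

theorem avg_mem (hu : IsCocycle m ζ hζ0 u) (hζm : ζ ^ m = 1)
    (x : LaurentPolynomial k ⊗[k] g) : avg m ζ hζ0 u x ∈ cocycleFixed ζ hζ0 u := by
  rw [mem_cocycleFixed_iff]
  intro j
  unfold avg
  rw [map_smul, map_sum]
  congr 1
  have h1 : ∀ i ∈ Finset.range m, theta ζ hζ0 u j (theta ζ hζ0 u i x)
      = theta ζ hζ0 u (j + i) x := fun i _ => (theta_add hu j i x).symm
  rw [Finset.sum_congr rfl h1]
  exact sum_shift m (fun i => theta ζ hζ0 u i x) (fun i => theta_period hu hζm i x) j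

theorem avg_of_fixed [CharZero k] (hm : 0 < m) {x : LaurentPolynomial k ⊗[k] g}
    (hx : x ∈ cocycleFixed ζ hζ0 u) : avg m ζ hζ0 u x = x := by
  rw [mem_cocycleFixed_iff] at hx
  unfold avg
  have h1 : ∀ i ∈ Finset.range m, theta ζ hζ0 u i x = x := fun i _ => hx i
  rw [Finset.sum_congr rfl h1, Finset.sum_const, Finset.card_range,
    ← Nat.cast_smul_eq_nsmul k m x, smul_smul,
    inv_mul_cancel₀ (Nat.cast_ne_zero.mpr hm.ne' : (m : k) ≠ 0), one_smul]

theorem avg_add (x y : LaurentPolynomial k ⊗[k] g) :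
    avg m ζ hζ0 u (x + y) = avg m ζ hζ0 u x + avg m ζ hζ0 u y := by
  unfold avg
  rw [← smul_add, ← Finset.sum_add_distrib]
  congr 1
  exact Finset.sum_congr rfl fun i _ => map_add _ x y

theorem avg_ksmul (c : k) (x : LaurentPolynomial k ⊗[k] g) :
    avg m ζ hζ0 u (c • x) = c • avg m ζ hζ0 u x := by
  unfold avg
  rw [smul_comm]
  congr 1
  rw [Finset.smul_sum]
  exact Finset.sum_congr rfl fun i _ => map_smul _ c x

end Avg
section Geom

variable {k : Type*} [Field k] {g : Type*} [LieRing g] [LieAlgebra k g]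

theorem C_mul_T_eq_smul (a : k) (j : ℤ) :
    (C a : LaurentPolynomial k) * T j = a • T j := by
  rw [← single_eq_C_mul_T]
  show AddMonoidAlgebra.single j a = a • AddMonoidAlgebra.single j 1
  rw [AddMonoidAlgebra.smul_single', mul_one]

theorem unit_val_zpow (ζ : k) (hζ0 : ζ ≠ 0) (i j : ℤ) :
    (((Units.mk0 ζ hζ0 ^ i) ^ j : kˣ) : k) = ζ ^ (i * j) := by
  rw [← zpow_mul, Units.val_zpow_eq_zpow_val]
  rfl

variable {m : ℕ} {ζ : k} {hζ0 : ζ ≠ 0}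
  {u : ℤ → ((LaurentPolynomial k ⊗[k] g) ≃ₗ[k] (LaurentPolynomial k ⊗[k] g))}

theorem theta_T_smul (hu : IsCocycle m ζ hζ0 u) (i j : ℤ) (x : LaurentPolynomial k ⊗[k] g) :
    theta ζ hζ0 u i ((T j : LaurentPolynomial k) • x)
      = ζ ^ (i * j) • ((T j : LaurentPolynomial k) • theta ζ hζ0 u i x) := by
  rw [theta_smul hu, scaleVarEquiv_T', unit_val_zpow, smul_assoc]

theorem geomAux (hm : 0 < m) (hζ : IsPrimitiveRoot ζ m) (j : ℤ) :
    ∑ i ∈ Finset.range m, ζ ^ ((i : ℤ) * j) = if (m : ℤ) ∣ j then (m : k) else 0 := by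
  have hterm : ∀ i ∈ Finset.range m, ζ ^ ((i : ℤ) * j) = (ζ ^ j) ^ (i : ℕ) := by
    intro i _
    rw [← zpow_natCast (ζ ^ j) i, ← zpow_mul, mul_comm]
  rw [Finset.sum_congr rfl hterm]
  by_cases hdvd : (m : ℤ) ∣ j
  · rw [if_pos hdvd, (hζ.zpow_eq_one_iff_dvd j).mpr hdvd]
    simp
  · rw [if_neg hdvd]
    have hne : ζ ^ j ≠ 1 := fun h => hdvd ((hζ.zpow_eq_one_iff_dvd j).mp h)
    rw [geom_sum_eq hne]
    have h1 : (ζ ^ j) ^ (m : ℕ) = 1 := by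
      rw [← zpow_natCast (ζ ^ j) m, ← zpow_mul, mul_comm, zpow_mul, zpow_natCast,
        hζ.pow_eq_one, one_zpow]
    rw [h1, sub_self, zero_div]

theorem avg_T_smul_of_fixed [CharZero k] (hu : IsCocycle m ζ hζ0 u) (hm : 0 < m)
    (hζ : IsPrimitiveRoot ζ m) (j : ℤ) {b : LaurentPolynomial k ⊗[k] g}
    (hb : b ∈ cocycleFixed ζ hζ0 u) :
    avg m ζ hζ0 u ((T j : LaurentPolynomial k) • b)
      = if (m : ℤ) ∣ j then (T j : LaurentPolynomial k) • b else 0 := by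
  rw [mem_cocycleFixed_iff] at hb
  unfold avg
  have h1 : ∀ i ∈ Finset.range m, theta ζ hζ0 u i ((T j : LaurentPolynomial k) • b)
      = ζ ^ ((i : ℤ) * j) • ((T j : LaurentPolynomial k) • b) := by
    intro i _
    rw [theta_T_smul hu, hb i]
  rw [Finset.sum_congr rfl h1, ← Finset.sum_smul, geomAux hm hζ j]
  by_cases hdvd : (m : ℤ) ∣ j
  · rw [if_pos hdvd, if_pos hdvd, smul_smul,
      inv_mul_cancel₀ (Nat.cast_ne_zero.mpr hm.ne' : (m : k) ≠ 0), one_smul]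
  · rw [if_neg hdvd, if_neg hdvd, zero_smul, smul_zero]

theorem avg_decomp [CharZero k] (hu : IsCocycle m ζ hζ0 u) (hm : 0 < m)
    (hζ : IsPrimitiveRoot ζ m) (x : LaurentPolynomial k ⊗[k] g) :
    ∑ n ∈ Finset.range m,
      (T (n : ℤ) : LaurentPolynomial k) • avg m ζ hζ0 u ((T (-(n : ℤ)) : LaurentPolynomial k) • x)
      = x := by
  have hterm : ∀ n ∈ Finset.range m,
      (T (n : ℤ) : LaurentPolynomial k) • avg m ζ hζ0 u ((T (-(n : ℤ)) : LaurentPolynomial k) • x)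
      = (m : k)⁻¹ • ∑ i ∈ Finset.range m, ζ ^ ((n : ℤ) * (-(i : ℤ))) • theta ζ hζ0 u i x := by
    intro n _
    unfold avg
    rw [smul_comm ((T (n : ℤ) : LaurentPolynomial k)) ((m : k)⁻¹), Finset.smul_sum]
    congr 1
    refine Finset.sum_congr rfl fun i _ => ?_
    rw [theta_T_smul hu, smul_comm ((T (n : ℤ) : LaurentPolynomial k)) (ζ ^ ((i : ℤ) * (-(n : ℤ)))),
      smul_smul ((T (n : ℤ) : LaurentPolynomial k)), ← T_add, add_neg_cancel, T_zero, one_smul]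
    congr 1
    ring_nf
  rw [Finset.sum_congr rfl hterm, ← Finset.smul_sum, Finset.sum_comm]
  have hinner : ∀ i ∈ Finset.range m,
      ∑ n ∈ Finset.range m, ζ ^ ((n : ℤ) * (-(i : ℤ))) • theta ζ hζ0 u i x
      = (if (m : ℤ) ∣ (-(i : ℤ)) then (m : k) else 0) • theta ζ hζ0 u i x := by
    intro i _
    rw [← Finset.sum_smul, geomAux hm hζ]
  rw [Finset.sum_congr rfl hinner]
  rw [Finset.sum_eq_single_of_mem 0 (Finset.mem_range.mpr hm)]
  · rw [Nat.cast_zero, neg_zero, if_pos (dvd_zero _), theta_zero hu, smul_smul,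
      inv_mul_cancel₀ (Nat.cast_ne_zero.mpr hm.ne' : (m : k) ≠ 0), one_smul]
  · intro i hi hne
    have : ¬ (m : ℤ) ∣ (-(i : ℤ)) := by
      rw [Int.dvd_neg, Int.natCast_dvd_natCast]
      intro hd
      exact hne (Nat.eq_zero_of_dvd_of_lt hd (Finset.mem_range.mp hi))
    rw [if_neg this, zero_smul]

theorem T_mem_Rsub {j : ℤ} (hj : (m : ℤ) ∣ j) : (T j : LaurentPolynomial k) ∈ Rsub k m := by
  obtain ⟨q, rfl⟩ := hj
  induction q using Int.induction_on with
  | zero => rw [mul_zero, T_zero]; exact one_mem _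
  | succ n ih =>
      have : (m : ℤ) * ((n : ℤ) + 1) = (m : ℤ) * n + m := by ring
      rw [this, T_add]
      exact mul_mem ih (Algebra.subset_adjoin (Set.mem_insert _ _))
  | pred n ih =>
      have : (m : ℤ) * (-(n : ℤ) - 1) = (m : ℤ) * (-(n : ℤ)) + (-(m : ℤ)) := by ring
      rw [this, T_add]
      exact mul_mem ih (Algebra.subset_adjoin (Set.mem_insert_of_mem _ rfl))

theorem span_range_T :
    Submodule.span k (Set.range (T : ℤ → LaurentPolynomial k)) = ⊤ := by
  rw [eq_top_iff]
  rintro p -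
  induction p using LaurentPolynomial.induction_on with
  | h_C a =>
      have : (C a : LaurentPolynomial k) = a • T 0 := by rw [← C_mul_T_eq_smul, T_zero, mul_one]
      rw [this]
      exact Submodule.smul_mem _ _ (Submodule.subset_span (Set.mem_range_self 0))
  | h_add hp hq => exact add_mem hp hq
  | h_C_mul_T n a _ =>
      rw [C_mul_T_eq_smul]
      exact Submodule.smul_mem _ _ (Submodule.subset_span (Set.mem_range_self _))
  | h_C_mul_T_Z n a _ =>
      rw [C_mul_T_eq_smul]
      exact Submodule.smul_mem _ _ (Submodule.subset_span (Set.mem_range_self _))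

end Geom
section Transfer

variable {k : Type*} [Field k] {g : Type*} [LieRing g] [LieAlgebra k g]
variable {m : ℕ} {ζ : k} {hζ0 : ζ ≠ 0}
  {w : ℤ → ((LaurentPolynomial k ⊗[k] g) ≃ₗ[k] (LaurentPolynomial k ⊗[k] g))}

/-- Projection onto the fixed-point submodule via averaging. -/
def toF (hw : IsCocycle m ζ hζ0 w) (hζm : ζ ^ m = 1)
    {F : Submodule ↥(Rsub k m) (LaurentPolynomial k ⊗[k] g)}
    (hF : (F : Set (LaurentPolynomial k ⊗[k] g)) = cocycleFixed ζ hζ0 w)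
    (x : LaurentPolynomial k ⊗[k] g) : ↥F :=
  ⟨avg m ζ hζ0 w x, by
    rw [← SetLike.mem_coe, hF]
    exact avg_mem hw hζm x⟩

variable {F : Submodule ↥(Rsub k m) (LaurentPolynomial k ⊗[k] g)}

theorem toF_coe (hw : IsCocycle m ζ hζ0 w) (hζm : ζ ^ m = 1)
    (hF : (F : Set (LaurentPolynomial k ⊗[k] g)) = cocycleFixed ζ hζ0 w)
    (x : LaurentPolynomial k ⊗[k] g) :
    ((toF hw hζm hF x : ↥F) : LaurentPolynomial k ⊗[k] g) = avg m ζ hζ0 w x := rfl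

theorem mem_of_fixed (hF : (F : Set (LaurentPolynomial k ⊗[k] g)) = cocycleFixed ζ hζ0 w)
    {x : LaurentPolynomial k ⊗[k] g} (hx : x ∈ cocycleFixed ζ hζ0 w) : x ∈ F := by
  rw [← SetLike.mem_coe, hF]; exact hx

theorem coe_mem_fixed (hF : (F : Set (LaurentPolynomial k ⊗[k] g)) = cocycleFixed ζ hζ0 w)
    (b : ↥F) : (b : LaurentPolynomial k ⊗[k] g) ∈ cocycleFixed ζ hζ0 w := by
  rw [← hF]; exact b.2

/-- The algebra element `c` of `Rsub`. -/
def cR (m : ℕ) (c : k) : ↥(Rsub k m) :=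
  ⟨algebraMap k (LaurentPolynomial k) c, Subalgebra.algebraMap_mem _ c⟩

theorem cR_smul (c : k) (x : LaurentPolynomial k ⊗[k] g) :
    (cR m c : ↥(Rsub k m)) • x = c • x := by
  show (algebraMap k (LaurentPolynomial k) c) • x = c • x
  rw [algebraMap_smul]

theorem toF_add (hw : IsCocycle m ζ hζ0 w) (hζm : ζ ^ m = 1)
    (hF : (F : Set (LaurentPolynomial k ⊗[k] g)) = cocycleFixed ζ hζ0 w)
    (x y : LaurentPolynomial k ⊗[k] g) :
    toF hw hζm hF (x + y) = toF hw hζm hF x + toF hw hζm hF y :=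
  Subtype.ext (avg_add x y)

theorem toF_ksmul (hw : IsCocycle m ζ hζ0 w) (hζm : ζ ^ m = 1)
    (hF : (F : Set (LaurentPolynomial k ⊗[k] g)) = cocycleFixed ζ hζ0 w)
    (c : k) (x : LaurentPolynomial k ⊗[k] g) :
    toF hw hζm hF (c • x) = (cR m c) • toF hw hζm hF x :=
  Subtype.ext (by
    rw [toF_coe]
    show avg m ζ hζ0 w (c • x) = (cR m c : ↥(Rsub k m)) • (avg m ζ hζ0 w x : LaurentPolynomial k ⊗[k] g)
    rw [cR_smul, avg_ksmul])

variable (L : ↥F →ₗ[↥(Rsub k m)] (LaurentPolynomial k ⊗[k] g))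

/-- The `S`-linear extension of `L` along the decomposition into fixed parts. -/
def transferL (hw : IsCocycle m ζ hζ0 w) (hζm : ζ ^ m = 1)
    (hF : (F : Set (LaurentPolynomial k ⊗[k] g)) = cocycleFixed ζ hζ0 w) :
    (LaurentPolynomial k ⊗[k] g) →ₗ[k] (LaurentPolynomial k ⊗[k] g) where
  toFun x := ∑ n ∈ Finset.range m,
    (T (n : ℤ) : LaurentPolynomial k) • L (toF hw hζm hF ((T (-(n : ℤ)) : LaurentPolynomial k) • x))
  map_add' x y := by
    rw [← Finset.sum_add_distrib]
    refine Finset.sum_congr rfl fun n _ => ?_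
    rw [smul_add ((T (-(n : ℤ)) : LaurentPolynomial k)) x y, toF_add, map_add, smul_add]
  map_smul' c x := by
    rw [RingHom.id_apply, Finset.smul_sum]
    refine Finset.sum_congr rfl fun n _ => ?_
    rw [smul_comm ((T (-(n : ℤ)) : LaurentPolynomial k)) c x, toF_ksmul, map_smul, cR_smul,
      smul_comm]

theorem transferL_apply (hw : IsCocycle m ζ hζ0 w) (hζm : ζ ^ m = 1)
    (hF : (F : Set (LaurentPolynomial k ⊗[k] g)) = cocycleFixed ζ hζ0 w)
    (x : LaurentPolynomial k ⊗[k] g) :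
    transferL L hw hζm hF x = ∑ n ∈ Finset.range m,
      (T (n : ℤ) : LaurentPolynomial k) •
        L (toF hw hζm hF ((T (-(n : ℤ)) : LaurentPolynomial k) • x)) := rfl

/-- Decomposition of an arbitrary element into `S`-multiples of fixed elements. -/
theorem decomp' [CharZero k] (hw : IsCocycle m ζ hζ0 w) (hm : 0 < m)
    (hζ : IsPrimitiveRoot ζ m) (hζm : ζ ^ m = 1)
    (hF : (F : Set (LaurentPolynomial k ⊗[k] g)) = cocycleFixed ζ hζ0 w)
    (x : LaurentPolynomial k ⊗[k] g) :
    ∑ n ∈ Finset.range m,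
      (T (n : ℤ) : LaurentPolynomial k) •
        ((toF hw hζm hF ((T (-(n : ℤ)) : LaurentPolynomial k) • x) : ↥F) :
          LaurentPolynomial k ⊗[k] g) = x := by
  have hc : ∀ n ∈ Finset.range m,
      (T (n : ℤ) : LaurentPolynomial k) •
        ((toF hw hζm hF ((T (-(n : ℤ)) : LaurentPolynomial k) • x) : ↥F) :
          LaurentPolynomial k ⊗[k] g)
      = (T (n : ℤ) : LaurentPolynomial k) •
          avg m ζ hζ0 w ((T (-(n : ℤ)) : LaurentPolynomial k) • x) := fun n _ => rfl
  rw [Finset.sum_congr rfl hc]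
  exact avg_decomp hw hm hζ x

theorem transferL_T_smul [CharZero k] (hw : IsCocycle m ζ hζ0 w) (hm : 0 < m)
    (hζ : IsPrimitiveRoot ζ m) (hζm : ζ ^ m = 1)
    (hF : (F : Set (LaurentPolynomial k ⊗[k] g)) = cocycleFixed ζ hζ0 w)
    (r : ℤ) (b : ↥F) :
    transferL L hw hζm hF ((T r : LaurentPolynomial k) • (b : LaurentPolynomial k ⊗[k] g))
      = (T r : LaurentPolynomial k) • L b := by
  have hb : (b : LaurentPolynomial k ⊗[k] g) ∈ cocycleFixed ζ hζ0 w := coe_mem_fixed hF b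
  have hmz : (m : ℤ) ≠ 0 := by exact_mod_cast hm.ne'
  set n₀ : ℕ := (r % (m : ℤ)).toNat with hn₀
  have hn₀r : (n₀ : ℤ) = r % (m : ℤ) := Int.toNat_of_nonneg (Int.emod_nonneg r hmz)
  have hn₀m : n₀ ∈ Finset.range m := by
    refine Finset.mem_range.mpr ?_
    have h1 : r % (m : ℤ) < m := Int.emod_lt_of_pos r (by exact_mod_cast hm)
    omega
  rw [transferL_apply]
  have hinner : ∀ n : ℕ, (T (-(n : ℤ)) : LaurentPolynomial k) •
      ((T r : LaurentPolynomial k) • (b : LaurentPolynomial k ⊗[k] g))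
      = (T (-(n : ℤ) + r) : LaurentPolynomial k) • (b : LaurentPolynomial k ⊗[k] g) := by
    intro n
    rw [smul_smul, ← T_add]
  rw [Finset.sum_eq_single_of_mem n₀ hn₀m]
  · have hdvd : (m : ℤ) ∣ (-(n₀ : ℤ) + r) := by
      refine ⟨r / m, ?_⟩
      rw [hn₀r, Int.emod_def]
      ring
    have htoF : toF hw hζm hF ((T (-(n₀ : ℤ)) : LaurentPolynomial k) •
        ((T r : LaurentPolynomial k) • (b : LaurentPolynomial k ⊗[k] g)))
        = (⟨T (-(n₀ : ℤ) + r), T_mem_Rsub hdvd⟩ : ↥(Rsub k m)) • b := by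
      apply Subtype.ext
      rw [toF_coe, hinner n₀, avg_T_smul_of_fixed hw hm hζ _ hb, if_pos hdvd]
      rfl
    rw [htoF, map_smul]
    have hcoe : ((⟨T (-(n₀ : ℤ) + r), T_mem_Rsub hdvd⟩ : ↥(Rsub k m)) • L b :
        LaurentPolynomial k ⊗[k] g) = (T (-(n₀ : ℤ) + r) : LaurentPolynomial k) • L b := rfl
    rw [hcoe, smul_smul, ← T_add]
    congr 2
    ring
  · intro i hi hne
    have hnd : ¬ (m : ℤ) ∣ (-(i : ℤ) + r) := by
      intro hd
      rw [neg_add_eq_sub] at hd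
      have hmod : (i : ℤ) % (m : ℤ) = r % (m : ℤ) := Int.ModEq.eq (Int.modEq_iff_dvd.mpr hd)
      have hii : (i : ℤ) % (m : ℤ) = (i : ℤ) :=
        Int.emod_eq_of_lt (Int.natCast_nonneg i) (by exact_mod_cast Finset.mem_range.mp hi)
      apply hne
      have : (i : ℤ) = (n₀ : ℤ) := by rw [hn₀r, ← hmod, hii]
      exact_mod_cast this
    have htoF : toF hw hζm hF ((T (-(i : ℤ)) : LaurentPolynomial k) •
        ((T r : LaurentPolynomial k) • (b : LaurentPolynomial k ⊗[k] g))) = 0 := by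
      apply Subtype.ext
      rw [toF_coe, hinner i, avg_T_smul_of_fixed hw hm hζ _ hb, if_neg hnd]
      rfl
    rw [htoF, map_zero, smul_zero]

theorem transferL_smul_fixed [CharZero k] (hw : IsCocycle m ζ hζ0 w) (hm : 0 < m)
    (hζ : IsPrimitiveRoot ζ m) (hζm : ζ ^ m = 1)
    (hF : (F : Set (LaurentPolynomial k ⊗[k] g)) = cocycleFixed ζ hζ0 w)
    (s : LaurentPolynomial k) (b : ↥F) :
    transferL L hw hζm hF (s • (b : LaurentPolynomial k ⊗[k] g)) = s • L b := by
  let P : Submodule k (LaurentPolynomial k) :=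
    { carrier := {s | transferL L hw hζm hF (s • (b : LaurentPolynomial k ⊗[k] g)) = s • L b}
      add_mem' := by
        intro s t hs ht
        show transferL L hw hζm hF ((s + t) • _) = _
        rw [add_smul, map_add, hs, ht, add_smul]
      zero_mem' := by
        show transferL L hw hζm hF ((0 : LaurentPolynomial k) • _) = _
        rw [zero_smul, map_zero, zero_smul]
      smul_mem' := by
        intro c s hs
        show transferL L hw hζm hF ((c • s) • _) = _
        rw [smul_assoc, map_smul, hs, smul_assoc] }
  have hT : ∀ r : ℤ, (T r : LaurentPolynomial k) ∈ P := fun r =>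
    transferL_T_smul L hw hm hζ hζm hF r b
  have hP : P = ⊤ := by
    rw [eq_top_iff, ← span_range_T, Submodule.span_le]
    rintro - ⟨r, rfl⟩
    exact hT r
  exact (hP ▸ Submodule.mem_top : s ∈ P)

end Transfer
section LieSum

variable {k : Type*} [Field k] {g : Type*} [LieRing g] [LieAlgebra k g]

theorem lie_sum' {ι : Type*} (s : Finset ι) (x : LaurentPolynomial k ⊗[k] g)
    (f : ι → LaurentPolynomial k ⊗[k] g) :
    ⁅x, ∑ i ∈ s, f i⁆ = ∑ i ∈ s, ⁅x, f i⁆ :=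
  map_sum (AddMonoidHom.mk' (fun y : LaurentPolynomial k ⊗[k] g => ⁅x, y⁆)
    (fun y z => lie_add x y z)) f s

theorem sum_lie' {ι : Type*} (s : Finset ι) (f : ι → LaurentPolynomial k ⊗[k] g)
    (x : LaurentPolynomial k ⊗[k] g) :
    ⁅∑ i ∈ s, f i, x⁆ = ∑ i ∈ s, ⁅f i, x⁆ :=
  map_sum (AddMonoidHom.mk' (fun y : LaurentPolynomial k ⊗[k] g => ⁅y, x⁆)
    (fun y z => add_lie y z x)) f s

theorem lie_T_smul (n p : ℤ) (x y : LaurentPolynomial k ⊗[k] g) :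
    ⁅(T n : LaurentPolynomial k) • x, (T p : LaurentPolynomial k) • y⁆
      = ((T n * T p : LaurentPolynomial k)) • ⁅x, y⁆ := by
  calc ⁅(T n : LaurentPolynomial k) • x, (T p : LaurentPolynomial k) • y⁆
      = (T n : LaurentPolynomial k) • ⁅x, (T p : LaurentPolynomial k) • y⁆ :=
        smul_lie (T n : LaurentPolynomial k) x ((T p : LaurentPolynomial k) • y)
    _ = (T n : LaurentPolynomial k) • ((T p : LaurentPolynomial k) • ⁅x, y⁆) :=
        congrArg (fun z => (T n : LaurentPolynomial k) • z)
          (lie_smul (T p : LaurentPolynomial k) x y)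
    _ = ((T n * T p : LaurentPolynomial k)) • ⁅x, y⁆ := smul_smul _ _ _

end LieSum
section Forward

variable {k : Type*} [Field k] [CharZero k] {g : Type*} [LieRing g] [LieAlgebra k g]
variable {m : ℕ} {ζ : k} {hζ0 : ζ ≠ 0}
variable {u v : ℤ → ((LaurentPolynomial k ⊗[k] g) ≃ₗ[k] (LaurentPolynomial k ⊗[k] g))}
variable {F₁ F₂ : Submodule ↥(Rsub k m) (LaurentPolynomial k ⊗[k] g)}

/-- The `S`-linear extension of `e.symm` to all of `g(S)`. -/
def fwdF (e : ↥F₁ ≃ₗ[↥(Rsub k m)] ↥F₂) (hv : IsCocycle m ζ hζ0 v) (hζm : ζ ^ m = 1)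
    (hF₂ : (F₂ : Set (LaurentPolynomial k ⊗[k] g)) = cocycleFixed ζ hζ0 v) :
    (LaurentPolynomial k ⊗[k] g) →ₗ[k] (LaurentPolynomial k ⊗[k] g) :=
  transferL ((Submodule.subtype F₁).comp e.symm.toLinearMap) hv hζm hF₂

theorem fwdF_T (e : ↥F₁ ≃ₗ[↥(Rsub k m)] ↥F₂) (hv : IsCocycle m ζ hζ0 v) (hm : 0 < m)
    (hζ : IsPrimitiveRoot ζ m) (hζm : ζ ^ m = 1)
    (hF₂ : (F₂ : Set (LaurentPolynomial k ⊗[k] g)) = cocycleFixed ζ hζ0 v)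
    (r : ℤ) (b : ↥F₂) :
    fwdF e hv hζm hF₂ ((T r : LaurentPolynomial k) • (b : LaurentPolynomial k ⊗[k] g))
      = (T r : LaurentPolynomial k) • ((e.symm b : ↥F₁) : LaurentPolynomial k ⊗[k] g) :=
  transferL_T_smul _ hv hm hζ hζm hF₂ r b

theorem fwdF_smul_fixed (e : ↥F₁ ≃ₗ[↥(Rsub k m)] ↥F₂) (hv : IsCocycle m ζ hζ0 v) (hm : 0 < m)
    (hζ : IsPrimitiveRoot ζ m) (hζm : ζ ^ m = 1)
    (hF₂ : (F₂ : Set (LaurentPolynomial k ⊗[k] g)) = cocycleFixed ζ hζ0 v)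
    (s : LaurentPolynomial k) (b : ↥F₂) :
    fwdF e hv hζm hF₂ (s • (b : LaurentPolynomial k ⊗[k] g))
      = s • ((e.symm b : ↥F₁) : LaurentPolynomial k ⊗[k] g) :=
  transferL_smul_fixed _ hv hm hζ hζm hF₂ s b

theorem fwdF_expand (e : ↥F₁ ≃ₗ[↥(Rsub k m)] ↥F₂) (hv : IsCocycle m ζ hζ0 v) (hm : 0 < m)
    (hζ : IsPrimitiveRoot ζ m) (hζm : ζ ^ m = 1)
    (hF₂ : (F₂ : Set (LaurentPolynomial k ⊗[k] g)) = cocycleFixed ζ hζ0 v)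
    (x : LaurentPolynomial k ⊗[k] g) :
    fwdF e hv hζm hF₂ x = ∑ n ∈ Finset.range m,
      (T (n : ℤ) : LaurentPolynomial k) •
        ((e.symm (toF hv hζm hF₂ ((T (-(n : ℤ)) : LaurentPolynomial k) • x)) : ↥F₁) :
          LaurentPolynomial k ⊗[k] g) := by
  conv_lhs => rw [← decomp' hv hm hζ hζm hF₂ x]
  rw [map_sum]
  exact Finset.sum_congr rfl fun n _ => fwdF_T e hv hm hζ hζm hF₂ _ _

theorem fwdF_inv (e : ↥F₁ ≃ₗ[↥(Rsub k m)] ↥F₂) (hu : IsCocycle m ζ hζ0 u)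
    (hv : IsCocycle m ζ hζ0 v) (hm : 0 < m) (hζ : IsPrimitiveRoot ζ m) (hζm : ζ ^ m = 1)
    (hF₁ : (F₁ : Set (LaurentPolynomial k ⊗[k] g)) = cocycleFixed ζ hζ0 u)
    (hF₂ : (F₂ : Set (LaurentPolynomial k ⊗[k] g)) = cocycleFixed ζ hζ0 v)
    (x : LaurentPolynomial k ⊗[k] g) :
    fwdF e.symm hu hζm hF₁ (fwdF e hv hζm hF₂ x) = x := by
  rw [fwdF_expand e hv hm hζ hζm hF₂ x, map_sum]
  have hterm : ∀ n ∈ Finset.range m,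
      fwdF e.symm hu hζm hF₁ ((T (n : ℤ) : LaurentPolynomial k) •
        ((e.symm (toF hv hζm hF₂ ((T (-(n : ℤ)) : LaurentPolynomial k) • x)) : ↥F₁) :
          LaurentPolynomial k ⊗[k] g))
      = (T (n : ℤ) : LaurentPolynomial k) •
          ((toF hv hζm hF₂ ((T (-(n : ℤ)) : LaurentPolynomial k) • x) : ↥F₂) :
            LaurentPolynomial k ⊗[k] g) := by
    intro n _
    rw [fwdF_T e.symm hu hm hζ hζm hF₁, LinearEquiv.symm_apply_apply]
  rw [Finset.sum_congr rfl hterm, decomp' hv hm hζ hζm hF₂ x]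

theorem fwdF_Ssmul (e : ↥F₁ ≃ₗ[↥(Rsub k m)] ↥F₂) (hv : IsCocycle m ζ hζ0 v) (hm : 0 < m)
    (hζ : IsPrimitiveRoot ζ m) (hζm : ζ ^ m = 1)
    (hF₂ : (F₂ : Set (LaurentPolynomial k ⊗[k] g)) = cocycleFixed ζ hζ0 v)
    (s : LaurentPolynomial k) (x : LaurentPolynomial k ⊗[k] g) :
    fwdF e hv hζm hF₂ (s • x) = s • fwdF e hv hζm hF₂ x := by
  conv_lhs => rw [← decomp' hv hm hζ hζm hF₂ x]
  rw [fwdF_expand e hv hm hζ hζm hF₂ x, Finset.smul_sum, Finset.smul_sum, map_sum]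
  refine Finset.sum_congr rfl fun n _ => ?_
  rw [smul_smul, fwdF_smul_fixed e hv hm hζ hζm hF₂, ← smul_smul]

theorem fwdF_theta (e : ↥F₁ ≃ₗ[↥(Rsub k m)] ↥F₂) (hu : IsCocycle m ζ hζ0 u)
    (hv : IsCocycle m ζ hζ0 v) (hm : 0 < m) (hζ : IsPrimitiveRoot ζ m) (hζm : ζ ^ m = 1)
    (hF₁ : (F₁ : Set (LaurentPolynomial k ⊗[k] g)) = cocycleFixed ζ hζ0 u)
    (hF₂ : (F₂ : Set (LaurentPolynomial k ⊗[k] g)) = cocycleFixed ζ hζ0 v)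
    (i : ℤ) (x : LaurentPolynomial k ⊗[k] g) :
    fwdF e hv hζm hF₂ (theta ζ hζ0 v i x) = theta ζ hζ0 u i (fwdF e hv hζm hF₂ x) := by
  conv_lhs => rw [← decomp' hv hm hζ hζm hF₂ x]
  rw [fwdF_expand e hv hm hζ hζm hF₂ x, map_sum, map_sum, map_sum]
  refine Finset.sum_congr rfl fun n _ => ?_
  have hbfix : ((toF hv hζm hF₂ ((T (-(n : ℤ)) : LaurentPolynomial k) • x) : ↥F₂) :
      LaurentPolynomial k ⊗[k] g) ∈ cocycleFixed ζ hζ0 v := coe_mem_fixed hF₂ _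
  have hbfix' : ((e.symm (toF hv hζm hF₂ ((T (-(n : ℤ)) : LaurentPolynomial k) • x)) : ↥F₁) :
      LaurentPolynomial k ⊗[k] g) ∈ cocycleFixed ζ hζ0 u := coe_mem_fixed hF₁ _
  rw [theta_T_smul hv, mem_cocycleFixed_iff.mp hbfix i, map_smul,
    fwdF_T e hv hm hζ hζm hF₂, theta_T_smul hu, mem_cocycleFixed_iff.mp hbfix' i]

theorem fwdF_lie (e : ↥F₁ ≃ₗ[↥(Rsub k m)] ↥F₂) (hu : IsCocycle m ζ hζ0 u)
    (hv : IsCocycle m ζ hζ0 v) (hm : 0 < m) (hζ : IsPrimitiveRoot ζ m) (hζm : ζ ^ m = 1)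
    (hF₁ : (F₁ : Set (LaurentPolynomial k ⊗[k] g)) = cocycleFixed ζ hζ0 u)
    (hF₂ : (F₂ : Set (LaurentPolynomial k ⊗[k] g)) = cocycleFixed ζ hζ0 v)
    (he : ∀ x y z : ↥F₁,
      (z : LaurentPolynomial k ⊗[k] g)
          = ⁅(x : LaurentPolynomial k ⊗[k] g), (y : LaurentPolynomial k ⊗[k] g)⁆ →
        ((e z : ↥F₂) : LaurentPolynomial k ⊗[k] g)
          = ⁅((e x : ↥F₂) : LaurentPolynomial k ⊗[k] g),
             ((e y : ↥F₂) : LaurentPolynomial k ⊗[k] g)⁆)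
    (x y : LaurentPolynomial k ⊗[k] g) :
    fwdF e hv hζm hF₂ ⁅x, y⁆ = ⁅fwdF e hv hζm hF₂ x, fwdF e hv hζm hF₂ y⁆ := by
  have hsymm_lie : ∀ (b c : ↥F₂)
      (hmem : ⁅(b : LaurentPolynomial k ⊗[k] g), (c : LaurentPolynomial k ⊗[k] g)⁆ ∈ F₂),
      ((e.symm (⟨⁅(b : LaurentPolynomial k ⊗[k] g), (c : LaurentPolynomial k ⊗[k] g)⁆, hmem⟩ :
          ↥F₂) : ↥F₁) : LaurentPolynomial k ⊗[k] g)
        = ⁅((e.symm b : ↥F₁) : LaurentPolynomial k ⊗[k] g),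
           ((e.symm c : ↥F₁) : LaurentPolynomial k ⊗[k] g)⁆ := by
    intro b c hmem
    have hz : ⁅((e.symm b : ↥F₁) : LaurentPolynomial k ⊗[k] g),
        ((e.symm c : ↥F₁) : LaurentPolynomial k ⊗[k] g)⁆ ∈ F₁ :=
      mem_of_fixed hF₁ (cocycleFixed_lie hu (coe_mem_fixed hF₁ _) (coe_mem_fixed hF₁ _))
    have h := he (e.symm b) (e.symm c) ⟨_, hz⟩ rfl
    rw [e.apply_symm_apply, e.apply_symm_apply] at h
    have h2 : e (⟨_, hz⟩ : ↥F₁)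
        = (⟨⁅(b : LaurentPolynomial k ⊗[k] g), (c : LaurentPolynomial k ⊗[k] g)⁆, hmem⟩ :
          ↥F₂) := Subtype.ext h
    have h3 : (⟨_, hz⟩ : ↥F₁)
        = e.symm (⟨⁅(b : LaurentPolynomial k ⊗[k] g), (c : LaurentPolynomial k ⊗[k] g)⁆, hmem⟩ :
          ↥F₂) := by
      rw [← h2, e.symm_apply_apply]
    exact congrArg Subtype.val h3.symm
  have haveR : ⁅fwdF e hv hζm hF₂ x, fwdF e hv hζm hF₂ y⁆
      = ∑ n ∈ Finset.range m, ∑ p ∈ Finset.range m,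
          ⁅(T (n : ℤ) : LaurentPolynomial k) •
              ((e.symm (toF hv hζm hF₂ ((T (-(n : ℤ)) : LaurentPolynomial k) • x)) : ↥F₁) :
                LaurentPolynomial k ⊗[k] g),
            (T (p : ℤ) : LaurentPolynomial k) •
              ((e.symm (toF hv hζm hF₂ ((T (-(p : ℤ)) : LaurentPolynomial k) • y)) : ↥F₁) :
                LaurentPolynomial k ⊗[k] g)⁆ := by
    rw [fwdF_expand e hv hm hζ hζm hF₂ x, fwdF_expand e hv hm hζ hζm hF₂ y, sum_lie']
    exact Finset.sum_congr rfl fun n _ => lie_sum' _ _ _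
  have haveL : fwdF e hv hζm hF₂ ⁅x, y⁆
      = ∑ n ∈ Finset.range m, ∑ p ∈ Finset.range m,
          ⁅(T (n : ℤ) : LaurentPolynomial k) •
              ((e.symm (toF hv hζm hF₂ ((T (-(n : ℤ)) : LaurentPolynomial k) • x)) : ↥F₁) :
                LaurentPolynomial k ⊗[k] g),
            (T (p : ℤ) : LaurentPolynomial k) •
              ((e.symm (toF hv hζm hF₂ ((T (-(p : ℤ)) : LaurentPolynomial k) • y)) : ↥F₁) :
                LaurentPolynomial k ⊗[k] g)⁆ := by
    conv_lhs => rw [← decomp' hv hm hζ hζm hF₂ x, ← decomp' hv hm hζ hζm hF₂ y]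
    rw [sum_lie', map_sum]
    refine Finset.sum_congr rfl fun n _ => ?_
    rw [lie_sum', map_sum]
    refine Finset.sum_congr rfl fun p _ => ?_
    rw [lie_T_smul]
    have hmem : ⁅((toF hv hζm hF₂ ((T (-(n : ℤ)) : LaurentPolynomial k) • x) : ↥F₂) :
        LaurentPolynomial k ⊗[k] g),
        ((toF hv hζm hF₂ ((T (-(p : ℤ)) : LaurentPolynomial k) • y) : ↥F₂) :
        LaurentPolynomial k ⊗[k] g)⁆ ∈ F₂ :=
      mem_of_fixed hF₂ (cocycleFixed_lie hv (coe_mem_fixed hF₂ _) (coe_mem_fixed hF₂ _))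
    have h1 := fwdF_smul_fixed e hv hm hζ hζm hF₂
      ((T (n : ℤ) * T (p : ℤ) : LaurentPolynomial k)) (⟨_, hmem⟩ : ↥F₂)
    rw [h1, hsymm_lie _ _ hmem, ← lie_T_smul]
  rw [haveL, haveR]

end Forward
/-- For 1-cocycles `u, v` on `Γ` in `Aut_S(g(S))`, the fixed point
algebras `g(S)_u` and `g(S)_v` are isomorphic as Lie algebras over `R` if and only if
`u` and `v` are cohomologous, i.e. there is `f ∈ Aut_S(g(S))` with
`v_ī = f⁻¹ ∘ u_ī ∘ ⁱf` for all `ī ∈ Γ`. -/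
theorem statement8 {k : Type*} [Field k] [CharZero k] {g : Type*} [LieRing g] [LieAlgebra k g]
    (m : ℕ) (hm : 0 < m) (ζ : k) (hζ : IsPrimitiveRoot ζ m)
    (u v : ℤ → ((LaurentPolynomial k ⊗[k] g) ≃ₗ[k] (LaurentPolynomial k ⊗[k] g)))
    (hu : IsCocycle m ζ (hζ.ne_zero hm.ne') u)
    (hv : IsCocycle m ζ (hζ.ne_zero hm.ne') v) :
    (∃ (F₁ F₂ : Submodule ↥(Rsub k m) (LaurentPolynomial k ⊗[k] g)),
      (F₁ : Set (LaurentPolynomial k ⊗[k] g)) = cocycleFixed ζ (hζ.ne_zero hm.ne') u ∧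
      (F₂ : Set (LaurentPolynomial k ⊗[k] g)) = cocycleFixed ζ (hζ.ne_zero hm.ne') v ∧
      ∃ e : ↥F₁ ≃ₗ[↥(Rsub k m)] ↥F₂,
        ∀ x y z : ↥F₁,
          (z : LaurentPolynomial k ⊗[k] g)
              = ⁅(x : LaurentPolynomial k ⊗[k] g), (y : LaurentPolynomial k ⊗[k] g)⁆ →
            (e z : LaurentPolynomial k ⊗[k] g)
              = ⁅(e x : LaurentPolynomial k ⊗[k] g), (e y : LaurentPolynomial k ⊗[k] g)⁆)
    ↔ ∃ f : (LaurentPolynomial k ⊗[k] g) ≃ₗ[k] (LaurentPolynomial k ⊗[k] g),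
        IsSAut f ∧
        ∀ i : ℤ,
          v i = ((gammaAct ζ (hζ.ne_zero hm.ne') i f).trans (u i)).trans f.symm := by
  have hζ0 : ζ ≠ 0 := hζ.ne_zero hm.ne'
  have hζm : ζ ^ m = 1 := hζ.pow_eq_one
  constructor
  · rintro ⟨F₁, F₂, hF₁, hF₂, e, he⟩
    have hGF : ∀ x, fwdF e.symm hu hζm hF₁ (fwdF e hv hζm hF₂ x) = x :=
      fwdF_inv e hu hv hm hζ hζm hF₁ hF₂
    have hFG : ∀ y, fwdF e hv hζm hF₂ (fwdF e.symm hu hζm hF₁ y) = y := by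
      intro y
      have h := fwdF_inv e.symm hv hu hm hζ hζm hF₂ hF₁ y
      rwa [LinearEquiv.symm_symm] at h
    refine ⟨LinearEquiv.ofLinear (fwdF e hv hζm hF₂) (fwdF e.symm hu hζm hF₁)
      (LinearMap.ext fun y => hFG y) (LinearMap.ext fun x => hGF x),
      ⟨fun s x => fwdF_Ssmul e hv hm hζ hζm hF₂ s x,
       fun x y => fwdF_lie e hu hv hm hζ hζm hF₁ hF₂ he x y⟩, ?_⟩
    intro i
    apply LinearEquiv.ext
    intro x
    set 𝔣 : (LaurentPolynomial k ⊗[k] g) ≃ₗ[k] (LaurentPolynomial k ⊗[k] g) :=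
      LinearEquiv.ofLinear (fwdF e hv hζm hF₂) (fwdF e.symm hu hζm hF₁)
        (LinearMap.ext fun y => hFG y) (LinearMap.ext fun x => hGF x) with h𝔣
    have hkey : 𝔣 (v i x)
        = u i (idTensorIota ζ hζ0 i (𝔣 ((idTensorIota ζ hζ0 i).symm x))) := by
      have hx : x = idTensorIota ζ hζ0 i ((idTensorIota ζ hζ0 i).symm x) :=
        (LinearEquiv.apply_symm_apply _ x).symm
      calc 𝔣 (v i x)
          = fwdF e hv hζm hF₂ (theta ζ hζ0 v i ((idTensorIota ζ hζ0 i).symm x)) := by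
            conv_lhs => rw [hx]
            rfl
        _ = theta ζ hζ0 u i (fwdF e hv hζm hF₂ ((idTensorIota ζ hζ0 i).symm x)) :=
            fwdF_theta e hu hv hm hζ hζm hF₁ hF₂ i _
        _ = u i (idTensorIota ζ hζ0 i (𝔣 ((idTensorIota ζ hζ0 i).symm x))) := rfl
    show v i x = 𝔣.symm (u i (idTensorIota ζ hζ0 i (𝔣 ((idTensorIota ζ hζ0 i).symm x))))
    rw [← hkey, LinearEquiv.symm_apply_apply]
  · rintro ⟨f, ⟨hfS, hfLie⟩, hrel⟩
    have hptw : ∀ (i : ℤ) (x : LaurentPolynomial k ⊗[k] g),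
        f (theta ζ hζ0 v i x) = theta ζ hζ0 u i (f x) := by
      intro i x
      have h := congrArg
        (fun φ : (LaurentPolynomial k ⊗[k] g) ≃ₗ[k] (LaurentPolynomial k ⊗[k] g)
          => φ (idTensorIota ζ hζ0 i x)) (hrel i)
      simp only [LinearEquiv.trans_apply] at h
      have hg : gammaAct ζ hζ0 i f (idTensorIota ζ hζ0 i x)
          = idTensorIota ζ hζ0 i (f x) := by
        show idTensorIota ζ hζ0 i
            (f ((idTensorIota ζ hζ0 i).symm (idTensorIota ζ hζ0 i x))) = _
        rw [LinearEquiv.symm_apply_apply]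
      rw [hg] at h
      have h2 := congrArg f h
      rw [f.apply_symm_apply] at h2
      exact h2
    have hf_mem : ∀ {x : LaurentPolynomial k ⊗[k] g},
        x ∈ cocycleFixed ζ hζ0 v → f x ∈ cocycleFixed ζ hζ0 u := by
      intro x hx
      have hx' := mem_cocycleFixed_iff.mp hx
      rw [mem_cocycleFixed_iff]
      intro i
      rw [← hptw i x, hx' i]
    have hfsymm_mem : ∀ {x : LaurentPolynomial k ⊗[k] g},
        x ∈ cocycleFixed ζ hζ0 u → f.symm x ∈ cocycleFixed ζ hζ0 v := by
      intro x hx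
      have hx' := mem_cocycleFixed_iff.mp hx
      rw [mem_cocycleFixed_iff]
      intro i
      apply f.injective
      rw [hptw i (f.symm x), f.apply_symm_apply, hx' i]
    have hfsymmS : ∀ (s : LaurentPolynomial k) (y : LaurentPolynomial k ⊗[k] g),
        f.symm (s • y) = s • f.symm y := by
      intro s y
      apply f.injective
      rw [f.apply_symm_apply, hfS, f.apply_symm_apply]
    have hfsymmLie : ∀ x y : LaurentPolynomial k ⊗[k] g,
        f.symm ⁅x, y⁆ = ⁅f.symm x, f.symm y⁆ := by
      intro x y
      apply f.injective
      rw [f.apply_symm_apply, hfLie, f.apply_symm_apply, f.apply_symm_apply]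
    refine ⟨fixedSubmodule hu hζm, fixedSubmodule hv hζm, rfl, rfl,
      ⟨{ toFun := fun x => ⟨f.symm ↑x, hfsymm_mem x.2⟩
         map_add' := fun x y => Subtype.ext (map_add f.symm _ _)
         map_smul' := fun r x => Subtype.ext (hfsymmS (r : LaurentPolynomial k) ↑x)
         invFun := fun y => ⟨f ↑y, hf_mem y.2⟩
         left_inv := fun x => Subtype.ext (f.apply_symm_apply _)
         right_inv := fun y => Subtype.ext (f.symm_apply_apply _) }, ?_⟩⟩
    intro x y z hz
    show f.symm ↑z = ⁅f.symm ↑x, f.symm ↑y⁆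
    rw [hz]
    exact hfsymmLie _ _
end LoopPaper
end
end

section
/- Let Q be a free abelian group and let g = ⊕_{α∈Q} g_α be a Q-graded Lie algebra over k (so [g_α, g_β] ⊆ g_{α+β} for all α, β ∈ Q) such that Q is generated as a group by the support {α ∈ Q : g_α ≠ 0}. Suppose τ and ρ are k-algebra automorphisms of g satisfying: (i) τ^m = ρ^m = id and τρ = ρτ; (ii) there exists a group homomorphism r : Q → k^× with ρ(x) = r(α)·x for all x ∈ g_α and α ∈ Q; (iii) there exists a group automorphism τ̂ of Q with τ(g_α) = g_{τ̂(α)} for all α ∈ Q. Let d ≥ 1 be an integer with τ̂^d = id, let ξ ∈ k be a primitive dm-th root of unity with ξ^d = ζ, let S' = k[z,z⁻¹], and let ι be the k-algebra automorphism of S' with ι(z) = ξ·z. Then there exists an S'-algebra automorphism φ of g ⊗_k S' such that φ ∘ (τ ⊗ ι⁻¹) ∘ φ⁻¹ = (τρ) ⊗ ι⁻¹; consequently the fixed-point subalgebras of τ ⊗ ι⁻¹ and of (τρ) ⊗ ι⁻¹ in g ⊗_k S' are isomorphic as Lie algebras over k[z^{dm}, z^{-dm}]. -/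
open scoped TensorProduct
open LaurentPolynomial

set_option maxHeartbeats 1000000
set_option synthInstance.maxHeartbeats 400000

noncomputable section

namespace LoopPaper

variable {k : Type*} [Field k] {g : Type*} [LieRing g] [LieAlgebra k g]

/-! ### Auxiliary material for the erasing theorem -/

section ErasingAux

variable {Q : Type*} [AddCommGroup Q] [DecidableEq Q]

/-- The unit `c • T n` of the Laurent polynomial ring. -/
def unitST (c : kˣ) (n : ℤ) : (LaurentPolynomial k)ˣ where
  val := (c : k) • T n
  inv := ((c⁻¹ : kˣ) : k) • T (-n)
  val_inv := by
    rw [smul_mul_smul_comm, ← T_add, add_neg_cancel, T_zero, ← Units.val_mul, mul_inv_cancel,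
      Units.val_one, one_smul]
  inv_val := by
    rw [smul_mul_smul_comm, ← T_add, neg_add_cancel, T_zero, ← Units.val_mul, inv_mul_cancel,
      Units.val_one, one_smul]

theorem unitST_val (c : kˣ) (n : ℤ) : ((unitST c n : (LaurentPolynomial k)ˣ) : LaurentPolynomial k) = (c : k) • T n := rfl

theorem unitST_inv_val (c : kˣ) (n : ℤ) :
    (((unitST c n)⁻¹ : (LaurentPolynomial k)ˣ) : LaurentPolynomial k) = ((c⁻¹ : kˣ) : k) • T (-n) := rfl

variable (G : Q → Submodule k g)

/-- The diagonal `S'`-linear endomorphism of `S' ⊗ g` multiplying the `G α` component by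
`f α`. -/
def gradedDiag (hG : DirectSum.IsInternal G) (f : Q → LaurentPolynomial k) :
    (LaurentPolynomial k ⊗[k] g) →ₗ[LaurentPolynomial k] (LaurentPolynomial k ⊗[k] g) :=
  LinearMap.liftBaseChange _
    ((DirectSum.toModule k Q _ fun α =>
        (TensorProduct.mk k (LaurentPolynomial k) g (f α)).comp (G α).subtype).comp
      ((LinearEquiv.ofBijective (DirectSum.coeLinearMap G) hG).symm.toLinearMap))

theorem gradedDiag_tmul (hG : DirectSum.IsInternal G) (f : Q → LaurentPolynomial k)
    {α : Q} {x : g} (hx : x ∈ G α) (p : LaurentPolynomial k) :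
    gradedDiag G hG f (p ⊗ₜ x) = (p * f α) ⊗ₜ x := by
  have hE : (LinearEquiv.ofBijective (DirectSum.coeLinearMap G) hG).symm x
      = DirectSum.of (fun α => ↥(G α)) α ⟨x, hx⟩ := by
    rw [LinearEquiv.symm_apply_eq]
    show x = DirectSum.coeLinearMap G (DirectSum.of (fun α => ↥(G α)) α ⟨x, hx⟩)
    rw [DirectSum.coeLinearMap_of]
  rw [gradedDiag, LinearMap.liftBaseChange_tmul, LinearMap.comp_apply,
    LinearEquiv.coe_coe, hE, ← DirectSum.lof_eq_of k, DirectSum.toModule_lof]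
  show p • ((f α) ⊗ₜ[k] x) = (p * f α) ⊗ₜ[k] x
  rw [TensorProduct.smul_tmul', smul_eq_mul]

theorem sprime_linear_ext (htop : iSup G = ⊤)
    {F₁ F₂ : (LaurentPolynomial k ⊗[k] g) →ₗ[LaurentPolynomial k] (LaurentPolynomial k ⊗[k] g)}
    (h : ∀ α : Q, ∀ x ∈ G α,
      F₁ ((1 : LaurentPolynomial k) ⊗ₜ x) = F₂ ((1 : LaurentPolynomial k) ⊗ₜ x)) : F₁ = F₂ := by
  have h1 : ∀ x : g, F₁ ((1 : LaurentPolynomial k) ⊗ₜ x) = F₂ ((1 : LaurentPolynomial k) ⊗ₜ x) := by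
    intro x
    have hx : x ∈ iSup G := htop ▸ Submodule.mem_top
    refine Submodule.iSup_induction G
      (motive := fun y => F₁ ((1 : LaurentPolynomial k) ⊗ₜ y) = F₂ ((1 : LaurentPolynomial k) ⊗ₜ y))
      hx (fun i y hy => h i y hy) ?_ ?_
    · show F₁ (1 ⊗ₜ (0:g)) = F₂ (1 ⊗ₜ (0:g))
      rw [TensorProduct.tmul_zero, map_zero, map_zero]
    · intro a b ha hb
      show F₁ (1 ⊗ₜ (a + b)) = F₂ (1 ⊗ₜ (a + b))
      rw [TensorProduct.tmul_add, map_add, map_add, ha, hb]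
  apply LinearMap.ext
  intro z
  have hz : z ∈ Submodule.span k
      {t : LaurentPolynomial k ⊗[k] g | ∃ p x, p ⊗ₜ x = t} := by
    rw [TensorProduct.span_tmul_eq_top]; trivial
  induction hz using Submodule.span_induction with
  | mem t ht =>
    obtain ⟨p, x, rfl⟩ := ht
    have : p ⊗ₜ[k] x = p • ((1 : LaurentPolynomial k) ⊗ₜ[k] x) := by
      rw [TensorProduct.smul_tmul', smul_eq_mul, mul_one]
    rw [this, map_smul, map_smul, h1]
  | zero => rw [map_zero, map_zero]
  | add a b _ _ ha hb => rw [map_add, map_add, ha, hb]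
  | smul c a _ ha =>
    rw [← algebraMap_smul (LaurentPolynomial k) c a, map_smul, map_smul, ha]

theorem gradedDiag_comp (hG : DirectSum.IsInternal G) (htop : iSup G = ⊤)
    (f₁ f₂ : Q → LaurentPolynomial k) :
    (gradedDiag G hG f₁).comp (gradedDiag G hG f₂) = gradedDiag G hG (fun α => f₁ α * f₂ α) := by
  refine sprime_linear_ext G htop fun α x hx => ?_
  rw [LinearMap.comp_apply, gradedDiag_tmul G hG f₂ hx, gradedDiag_tmul G hG f₁ hx,
    gradedDiag_tmul G hG _ hx, mul_assoc, mul_comm (f₂ α) (f₁ α)]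

theorem gradedDiag_one (hG : DirectSum.IsInternal G) (htop : iSup G = ⊤) :
    gradedDiag G hG (fun _ => (1 : LaurentPolynomial k)) = LinearMap.id := by
  refine sprime_linear_ext G htop fun α x hx => ?_
  rw [gradedDiag_tmul G hG _ hx, mul_one, LinearMap.id_apply]

/-- The diagonal `S'`-linear automorphism of `S' ⊗ g` multiplying the `G α` component by the
unit `f α`. -/
def gradedDiagEquiv (hG : DirectSum.IsInternal G) (htop : iSup G = ⊤)
    (f : Q → (LaurentPolynomial k)ˣ) :
    (LaurentPolynomial k ⊗[k] g) ≃ₗ[LaurentPolynomial k] (LaurentPolynomial k ⊗[k] g) :=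
  LinearEquiv.ofLinear (gradedDiag G hG fun α => (f α : LaurentPolynomial k))
    (gradedDiag G hG fun α => ((f α)⁻¹ : (LaurentPolynomial k)ˣ))
    (by have h1 : (fun α => ((f α : LaurentPolynomial k)
          * (((f α)⁻¹ : (LaurentPolynomial k)ˣ) : LaurentPolynomial k)))
          = fun _ => (1 : LaurentPolynomial k) := by
          funext α; exact Units.mul_inv _
        rw [gradedDiag_comp G hG htop, h1, gradedDiag_one G hG htop])
    (by have h1 : (fun α => ((((f α)⁻¹ : (LaurentPolynomial k)ˣ) : LaurentPolynomial k)
          * (f α : LaurentPolynomial k)))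
          = fun _ => (1 : LaurentPolynomial k) := by
          funext α; exact Units.inv_mul _
        rw [gradedDiag_comp G hG htop, h1, gradedDiag_one G hG htop])

theorem gradedDiagEquiv_tmul (hG : DirectSum.IsInternal G) (htop : iSup G = ⊤)
    (f : Q → (LaurentPolynomial k)ˣ) {α : Q} {x : g} (hx : x ∈ G α) (p : LaurentPolynomial k) :
    gradedDiagEquiv G hG htop f (p ⊗ₜ x) = (p * (f α : LaurentPolynomial k)) ⊗ₜ x := by
  rw [gradedDiagEquiv, LinearEquiv.ofLinear_apply, gradedDiag_tmul G hG _ hx]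

theorem gradedDiagEquiv_symm_tmul (hG : DirectSum.IsInternal G) (htop : iSup G = ⊤)
    (f : Q → (LaurentPolynomial k)ˣ) {α : Q} {x : g} (hx : x ∈ G α) (p : LaurentPolynomial k) :
    (gradedDiagEquiv G hG htop f).symm (p ⊗ₜ x)
      = (p * (((f α)⁻¹ : (LaurentPolynomial k)ˣ) : LaurentPolynomial k)) ⊗ₜ x := by
  rw [gradedDiagEquiv, LinearEquiv.ofLinear_symm_apply, gradedDiag_tmul G hG _ hx]

end ErasingAux

/-- In the setting of the erasing theorem, with `d` a period of
`τ̂` and `ξ` a primitive `dm`-th root of unity with `ξ^d = ζ`, there is an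
`S'`-algebra automorphism `φ` of `g ⊗ S'` with
`φ ∘ (τ ⊗ ι⁻¹) ∘ φ⁻¹ = (τρ) ⊗ ι⁻¹`, where `ι(z) = ξ z`; consequently `φ` carries the
fixed point subalgebra of `τ ⊗ ι⁻¹` onto that of `(τρ) ⊗ ι⁻¹` (giving an isomorphism
of Lie algebras over `k[z^{dm}, z^{-dm}]`). -/
theorem statement19 {k : Type*} [Field k] [CharZero k] {g : Type*} [LieRing g] [LieAlgebra k g]
    (m : ℕ) (hm : 0 < m) (ζ : k) (hζ : IsPrimitiveRoot ζ m)
    {Q : Type*} [AddCommGroup Q] [DecidableEq Q] [Module.Free ℤ Q]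
    (G : Q → Submodule k g)
    (hinternal : DirectSum.IsInternal G)
    (hsupport : AddSubgroup.closure {α : Q | G α ≠ ⊥} = ⊤)
    (hgraded : ∀ (α β : Q), ∀ x ∈ G α, ∀ y ∈ G β, ⁅x, y⁆ ∈ G (α + β))
    (τ ρ : g ≃ₗ[k] g) (hbrτ : IsLieAut τ) (hbrρ : IsLieAut ρ)
    (hτ : τ ^ m = 1) (hρ : ρ ^ m = 1) (hcomm : τ * ρ = ρ * τ)
    (r : Q → kˣ) (hr : ∀ α β : Q, r (α + β) = r α * r β)
    (hAd : ∀ (α : Q), ∀ x ∈ G α, ρ x = ((r α : k)) • x)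
    (τhat : Q ≃+ Q)
    (hτhat : ∀ α : Q, Submodule.map (τ : g →ₗ[k] g) (G α) = G (τhat α))
    (d : ℕ) (hd : 0 < d) (hτhatd : ∀ α : Q, τhat^[d] α = α)
    (ξ : k) (hξ : IsPrimitiveRoot ξ (d * m)) (hξd : ξ ^ d = ζ) :
    ∃ φ : (LaurentPolynomial k ⊗[k] g) ≃ₗ[LaurentPolynomial k]
          (LaurentPolynomial k ⊗[k] g),
      (∀ x y : LaurentPolynomial k ⊗[k] g, φ ⁅x, y⁆ = ⁅φ x, φ y⁆) ∧
      (∀ x : LaurentPolynomial k ⊗[k] g,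
        φ ((TensorProduct.congr
              (scaleVarEquiv (Units.mk0 ξ (hξ.ne_zero
                (Nat.mul_ne_zero hd.ne' hm.ne')))).symm.toLinearEquiv τ)
            (φ.symm x))
          = (TensorProduct.congr
              (scaleVarEquiv (Units.mk0 ξ (hξ.ne_zero
                (Nat.mul_ne_zero hd.ne' hm.ne')))).symm.toLinearEquiv (τ * ρ)) x) ∧
      Submodule.map ((φ : (LaurentPolynomial k ⊗[k] g) →ₗ[LaurentPolynomial k]
              (LaurentPolynomial k ⊗[k] g)).restrictScalars k)
          (LinearMap.ker
            ((TensorProduct.congr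
                (scaleVarEquiv (Units.mk0 ξ (hξ.ne_zero
                  (Nat.mul_ne_zero hd.ne' hm.ne')))).symm.toLinearEquiv τ).toLinearMap
              - LinearMap.id))
        = LinearMap.ker
            ((TensorProduct.congr
                (scaleVarEquiv (Units.mk0 ξ (hξ.ne_zero
                  (Nat.mul_ne_zero hd.ne' hm.ne')))).symm.toLinearEquiv (τ * ρ)).toLinearMap
              - LinearMap.id) := by
  classical
  haveI : NeZero m := ⟨hm.ne'⟩
  have hξ0 : ξ ≠ 0 := hξ.ne_zero (Nat.mul_ne_zero hd.ne' hm.ne')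
  have hζ0 : ζ ≠ 0 := hζ.ne_zero hm.ne'
  set Ξ : kˣ := Units.mk0 ξ (hξ.ne_zero (Nat.mul_ne_zero hd.ne' hm.ne')) with hΞ
  set Z : kˣ := Units.mk0 ζ hζ0 with hZ
  have htop : iSup G = ⊤ := hinternal.submodule_iSup_eq_top
  -- `r` is a homomorphism
  have hr0 : r 0 = 1 := by
    have h := hr 0 0
    rw [add_zero] at h
    exact (left_eq_mul.mp h)
  have hrneg : ∀ α : Q, r (-α) = (r α)⁻¹ := by
    intro α
    have h := hr α (-α)
    rw [add_neg_cancel, hr0] at h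
    exact (inv_eq_of_mul_eq_one_right h.symm).symm
  have hr_zsmul : ∀ (c : ℤ) (α : Q), r (c • α) = r α ^ c := by
    let rhom : Q →+ Additive kˣ :=
      AddMonoidHom.mk' (fun α => Additive.ofMul (r α)) (fun a b => congrArg Additive.ofMul (hr a b))
    intro c α
    have h := map_zsmul rhom c α
    have h2 : Additive.toMul (rhom (c • α)) = Additive.toMul ((c • (rhom α) : Additive kˣ)) :=
      congrArg Additive.toMul h
    rw [toMul_zsmul] at h2
    exact h2
  -- `r` takes values in the `m`-th roots of unity
  have hrm : ∀ α : Q, r α ^ m = 1 := by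
    let H : AddSubgroup Q :=
      { carrier := {α | r α ^ m = 1}
        add_mem' := fun {a b} ha hb => by
          show r (a + b) ^ m = 1
          rw [hr, mul_pow, ha, hb, one_mul]
        zero_mem' := by show r 0 ^ m = 1; rw [hr0, one_pow]
        neg_mem' := fun {a} ha => by
          show r (-a) ^ m = 1
          rw [hrneg, inv_pow, ha, inv_one] }
    have hsub : {α : Q | G α ≠ ⊥} ⊆ H := by
      intro α hα
      obtain ⟨x, hxG, hx0⟩ := Submodule.exists_mem_ne_zero_of_ne_bot hα
      have hpow : ∀ j : ℕ, (ρ ^ j) x = ((r α : k)) ^ j • x := by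
        intro j
        induction j with
        | zero => rw [pow_zero, pow_zero, one_smul]; rfl
        | succ j ih =>
          rw [pow_succ]
          show (ρ ^ j) (ρ x) = (r α : k) ^ (j + 1) • x
          rw [hAd α x hxG, map_smul, ih, smul_smul, mul_comm, ← pow_succ]
      have hx : ((r α : k)) ^ m • x = x := by
        have h := hpow m
        rw [hρ] at h
        exact h.symm.trans rfl
      have hval : ((r α : k)) ^ m = 1 := by
        by_contra hne
        have : (((r α : k)) ^ m - 1) • x = 0 := by
          rw [sub_smul, one_smul, hx, sub_self]
        rcases smul_eq_zero.mp this with h | h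
        · exact hne (by linear_combination h)
        · exact hx0 h
      exact Units.ext (by rw [Units.val_pow_eq_pow_val, hval, Units.val_one])
    intro α
    have hle : (⊤ : AddSubgroup Q) ≤ H := by
      rw [← hsupport]
      exact (AddSubgroup.closure_le H).mpr hsub
    exact hle trivial
  -- choose the integral "logarithm" `slin` of `r` with base `ζ`
  obtain ⟨slin, hs⟩ : ∃ slin : Q →ₗ[ℤ] ℤ, ∀ α : Q, Z ^ slin α = r α := by
    let b := Module.Free.chooseBasis ℤ Q
    have hex : ∀ i, ∃ e : ℕ, ζ ^ e = ((r (b i) : k)) := by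
      intro i
      obtain ⟨e, _, he⟩ := hζ.eq_pow_of_pow_eq_one (ξ := ((r (b i) : k))) (by
        have h := hrm (b i)
        rw [← Units.val_pow_eq_pow_val, h, Units.val_one])
      exact ⟨e, he⟩
    choose e he using hex
    refine ⟨b.constr ℤ (fun i => (e i : ℤ)), ?_⟩
    intro α
    have hαtop : α ∈ Submodule.span ℤ (Set.range ⇑b) := by rw [b.span_eq]; trivial
    induction hαtop using Submodule.span_induction with
    | mem x hxel =>
      obtain ⟨i, rfl⟩ := hxel
      have h1 : (b.constr ℤ (fun i => (e i : ℤ))) (b i) = (e i : ℤ) := b.constr_basis ℤ _ i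
      apply Units.ext
      rw [h1, Units.val_zpow_eq_zpow_val, hZ, Units.val_mk0, zpow_natCast, he]
    | zero => rw [map_zero, zpow_zero, hr0]
    | add x y _ _ hx hy => rw [map_add, zpow_add, hx, hy, hr]
    | smul c x _ hx =>
      rw [map_smul, smul_eq_mul, mul_comm, zpow_mul, hx, hr_zsmul]
  -- iterates of τhat
  have hiter_add : ∀ (j : ℕ) (α β : Q), τhat^[j] (α + β) = τhat^[j] α + τhat^[j] β := by
    intro j
    induction j with
    | zero => intro α β; simp
    | succ j ih =>
      intro α β
      simp only [Function.iterate_succ_apply, map_add, ih]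
  obtain ⟨nn, hnn⟩ : ∃ nn : Q → ℤ, ∀ α,
      nn α = ∑ j ∈ Finset.range d, slin (τhat^[j] α) := ⟨_, fun _ => rfl⟩
  obtain ⟨vv, hvv⟩ : ∃ vv : Q → ℤ, ∀ α,
      vv α = ∑ j ∈ Finset.range d, (j : ℤ) * slin (τhat^[j] α) := ⟨_, fun _ => rfl⟩
  have hnadd : ∀ α β, nn (α + β) = nn α + nn β := by
    intro α β
    rw [hnn, hnn, hnn, ← Finset.sum_add_distrib]
    exact Finset.sum_congr rfl fun j _ => by rw [hiter_add, map_add]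
  have hvadd : ∀ α β, vv (α + β) = vv α + vv β := by
    intro α β
    rw [hvv, hvv, hvv, ← Finset.sum_add_distrib]
    exact Finset.sum_congr rfl fun j _ => by rw [hiter_add, map_add, mul_add]
  have hFsucc : ∀ (j : ℕ) (α : Q), slin (τhat^[j] (τhat α)) = slin (τhat^[j + 1] α) := by
    intro j α
    rw [Function.iterate_succ_apply]
  have hFd : ∀ α : Q, slin (τhat^[d] α) = slin α := fun α => by rw [hτhatd α]
  have hntau : ∀ α : Q, nn (τhat α) = nn α := by
    intro α
    have h1 : nn (τhat α) - nn α
        = ∑ j ∈ Finset.range d, (slin (τhat^[j + 1] α) - slin (τhat^[j] α)) := by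
      rw [hnn, hnn, ← Finset.sum_sub_distrib]
      exact Finset.sum_congr rfl fun j _ => by rw [hFsucc]
    rw [Finset.sum_range_sub (fun j => slin (τhat^[j] α)) d, hFd] at h1
    simp only [Function.iterate_zero_apply] at h1
    omega
  have hvtau : ∀ α : Q, vv (τhat α) = vv α - nn α + d * slin α := by
    intro α
    have hsum : vv (τhat α) + nn α - vv α
        = ∑ j ∈ Finset.range d,
            ((fun i : ℕ => ((i : ℤ) - 1) * slin (τhat^[i] α)) (j + 1)
              - (fun i : ℕ => ((i : ℤ) - 1) * slin (τhat^[i] α)) j) := by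
      rw [hvv, hvv, hnn, ← Finset.sum_add_distrib, ← Finset.sum_sub_distrib]
      refine Finset.sum_congr rfl fun j _ => ?_
      simp only []
      rw [hFsucc]
      push_cast
      ring
    rw [Finset.sum_range_sub (fun i : ℕ => ((i : ℤ) - 1) * slin (τhat^[i] α)) d] at hsum
    simp only [Function.iterate_zero_apply, hFd] at hsum
    push_cast at hsum
    linarith
  -- the twisting units
  obtain ⟨f, hf⟩ : ∃ f : Q → (LaurentPolynomial k)ˣ,
      ∀ α, f α = unitST (Ξ ^ vv α) (nn α) := ⟨_, fun _ => rfl⟩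
  have hfmul : ∀ α β, f (α + β) = f α * f β := by
    intro α β
    apply Units.ext
    rw [hf, hf, hf, Units.val_mul, unitST_val, unitST_val, unitST_val, smul_mul_smul_comm,
      ← T_add, hnadd, hvadd, zpow_add, Units.val_mul]
  -- the scale-by-`Ξ⁻¹` computation
  have hsva : ∀ p : LaurentPolynomial k, (scaleVarEquiv Ξ).symm p = scaleVar Ξ⁻¹ p :=
    fun _ => rfl
  have hkey : ∀ α : Q,
      scaleVar Ξ⁻¹ (((f α)⁻¹ : (LaurentPolynomial k)ˣ) : LaurentPolynomial k)
        * ((f (τhat α) : (LaurentPolynomial k)ˣ) : LaurentPolynomial k)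
      = (r α : k) • (1 : LaurentPolynomial k) := by
    intro α
    rw [hf, hf, unitST_inv_val, unitST_val, hntau, hvtau, map_smul, scaleVar_T,
      smul_smul, smul_mul_smul_comm, ← T_add, neg_add_cancel, T_zero]
    congr 1
    rw [Units.val_inv_eq_inv_val, Units.val_zpow_eq_zpow_val, Units.val_zpow_eq_zpow_val,
      Units.val_zpow_eq_zpow_val, Units.val_inv_eq_inv_val, hΞ, Units.val_mk0, ← zpow_neg,
      inv_zpow', neg_neg, ← zpow_add₀ hξ0, ← zpow_add₀ hξ0]
    have hexp : -vv α + nn α + (vv α - nn α + ↑d * slin α) = (d : ℤ) * slin α := by ring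
    rw [hexp, zpow_mul, zpow_natCast, hξd]
    have h := congrArg Units.val (hs α)
    rw [Units.val_zpow_eq_zpow_val, hZ, Units.val_mk0] at h
    exact h
  -- membership facts
  have hτmem : ∀ {α : Q} {a : g}, a ∈ G α → τ a ∈ G (τhat α) := by
    intro α a ha
    rw [← hτhat α]
    exact ⟨a, ha, rfl⟩
  -- the span of graded pure tensors
  have hspan : ∀ x : LaurentPolynomial k ⊗[k] g, x ∈ Submodule.span k
      {t : LaurentPolynomial k ⊗[k] g |
        ∃ (p : LaurentPolynomial k) (α : Q) (a : g), a ∈ G α ∧ t = p ⊗ₜ a} := by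
    intro x
    have hpure : ∀ (p : LaurentPolynomial k) (a : g), p ⊗ₜ[k] a ∈ Submodule.span k
        {t : LaurentPolynomial k ⊗[k] g |
          ∃ (p : LaurentPolynomial k) (α : Q) (a : g), a ∈ G α ∧ t = p ⊗ₜ a} := by
      intro p a
      have hGle : ∀ α, G α ≤ Submodule.comap (TensorProduct.mk k (LaurentPolynomial k) g p)
          (Submodule.span k {t : LaurentPolynomial k ⊗[k] g |
            ∃ (p : LaurentPolynomial k) (α : Q) (a : g), a ∈ G α ∧ t = p ⊗ₜ a}) :=
        fun α y hy => Submodule.subset_span ⟨p, α, y, hy, rfl⟩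
      have hle := iSup_le hGle
      rw [htop] at hle
      exact hle trivial
    have hx : x ∈ Submodule.span k
        {t : LaurentPolynomial k ⊗[k] g | ∃ p a, p ⊗ₜ a = t} := by
      rw [TensorProduct.span_tmul_eq_top]; trivial
    refine Submodule.span_le.mpr ?_ hx
    rintro t ⟨p, a, rfl⟩
    exact hpure p a
  -- the conjugating automorphism
  set φ := gradedDiagEquiv G hinternal htop f with hφdef
  have hφk : ∀ (c : k) (x : LaurentPolynomial k ⊗[k] g), φ (c • x) = c • φ x := by
    intro c x
    rw [← algebraMap_smul (LaurentPolynomial k) c x, map_smul, algebraMap_smul]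
  have hφsk : ∀ (c : k) (x : LaurentPolynomial k ⊗[k] g), φ.symm (c • x) = c • φ.symm x := by
    intro c x
    rw [← algebraMap_smul (LaurentPolynomial k) c x, map_smul, algebraMap_smul]
  have hconj : ∀ x : LaurentPolynomial k ⊗[k] g,
      φ ((TensorProduct.congr (scaleVarEquiv Ξ).symm.toLinearEquiv τ) (φ.symm x))
        = (TensorProduct.congr (scaleVarEquiv Ξ).symm.toLinearEquiv (τ * ρ)) x := by
    intro x
    induction hspan x using Submodule.span_induction with
    | mem t ht =>
      obtain ⟨p, α, a, ha, rfl⟩ := ht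
      rw [gradedDiagEquiv_symm_tmul G hinternal htop f ha, TensorProduct.congr_tmul,
        TensorProduct.congr_tmul, AlgEquiv.toLinearEquiv_apply, AlgEquiv.toLinearEquiv_apply,
        hsva, hsva, map_mul]
      have hτρ : (τ * ρ) a = (r α : k) • τ a := by
        show τ (ρ a) = (r α : k) • τ a
        rw [hAd α a ha, map_smul]
      rw [hτρ, TensorProduct.tmul_smul, TensorProduct.smul_tmul',
        gradedDiagEquiv_tmul G hinternal htop f (hτmem ha)]
      congr 1
      rw [mul_assoc, hkey α, mul_smul_comm, mul_one]
    | zero => rw [map_zero, map_zero, map_zero, map_zero]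
    | add u w _ _ hu hw => rw [map_add, map_add, map_add, hu, hw, map_add]
    | smul c u _ hu =>
      rw [hφsk, LinearEquiv.map_smul, hφk, hu, LinearEquiv.map_smul]
  refine ⟨φ, ?_, hconj, ?_⟩
  · -- bracket preservation
    have hbase : ∀ (p : LaurentPolynomial k) (α : Q) (a : g), a ∈ G α →
        ∀ y, φ ⁅p ⊗ₜ[k] a, y⁆ = ⁅φ (p ⊗ₜ[k] a), φ y⁆ := by
      intro p α a ha y
      induction hspan y using Submodule.span_induction with
      | mem t ht =>
        obtain ⟨q, β, b, hb, rfl⟩ := ht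
        rw [LieAlgebra.ExtendScalars.bracket_tmul,
          gradedDiagEquiv_tmul G hinternal htop f (hgraded α β a ha b hb),
          gradedDiagEquiv_tmul G hinternal htop f ha,
          gradedDiagEquiv_tmul G hinternal htop f hb,
          LieAlgebra.ExtendScalars.bracket_tmul]
        congr 1
        rw [hfmul, Units.val_mul]
        ring
      | zero =>
        have h0 : ⁅(p ⊗ₜ[k] a : LaurentPolynomial k ⊗[k] g),
            (0 : LaurentPolynomial k ⊗[k] g)⁆ = 0 :=
          lie_zero (p ⊗ₜ[k] a : LaurentPolynomial k ⊗[k] g)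
        have h1 : ⁅φ (p ⊗ₜ[k] a), (0 : LaurentPolynomial k ⊗[k] g)⁆ = 0 := lie_zero (φ (p ⊗ₜ[k] a))
        rw [h0, map_zero, h1]
      | add u w _ _ hu hw =>
        have h0 : ⁅(p ⊗ₜ[k] a : LaurentPolynomial k ⊗[k] g), u + w⁆
            = ⁅p ⊗ₜ[k] a, u⁆ + ⁅p ⊗ₜ[k] a, w⁆ :=
          lie_add (p ⊗ₜ[k] a : LaurentPolynomial k ⊗[k] g) u w
        have h1 : ⁅φ (p ⊗ₜ[k] a), φ u + φ w⁆
            = ⁅φ (p ⊗ₜ[k] a), φ u⁆ + ⁅φ (p ⊗ₜ[k] a), φ w⁆ :=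
          lie_add (φ (p ⊗ₜ[k] a)) (φ u) (φ w)
        rw [h0, map_add, map_add, hu, hw, h1]
      | smul c u _ hu =>
        have h0 : ⁅(p ⊗ₜ[k] a : LaurentPolynomial k ⊗[k] g), c • u⁆
            = c • ⁅p ⊗ₜ[k] a, u⁆ := lie_smul c (p ⊗ₜ[k] a : LaurentPolynomial k ⊗[k] g) u
        have h1 : ⁅φ (p ⊗ₜ[k] a), c • φ u⁆
            = c • ⁅φ (p ⊗ₜ[k] a), φ u⁆ := lie_smul c (φ (p ⊗ₜ[k] a)) (φ u)
        rw [h0, hφk, hu, hφk, h1]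
    intro x y
    induction hspan x using Submodule.span_induction with
    | mem t ht =>
      obtain ⟨p, α, a, ha, rfl⟩ := ht
      exact hbase p α a ha y
    | zero =>
      have h0 : ⁅(0 : LaurentPolynomial k ⊗[k] g), y⁆ = 0 := zero_lie y
      have h1 : ⁅(0 : LaurentPolynomial k ⊗[k] g), φ y⁆ = 0 := zero_lie (φ y)
      rw [h0, map_zero, h1]
    | add u w _ _ hu hw =>
      have h0 : ⁅u + w, y⁆ = ⁅u, y⁆ + ⁅w, y⁆ := add_lie u w y
      have h1 : ⁅φ u + φ w, φ y⁆ = ⁅φ u, φ y⁆ + ⁅φ w, φ y⁆ := add_lie (φ u) (φ w) (φ y)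
      rw [h0, map_add, map_add, hu, hw, h1]
    | smul c u _ hu =>
      have h0 : ⁅c • u, y⁆ = c • ⁅u, y⁆ := smul_lie c u y
      have h1 : ⁅c • φ u, φ y⁆ = c • ⁅φ u, φ y⁆ := smul_lie c (φ u) (φ y)
      rw [h0, hφk, hu, hφk, h1]
  · -- the fixed-point subalgebras correspond
    have hcomm2 : ∀ y : LaurentPolynomial k ⊗[k] g,
        (TensorProduct.congr (scaleVarEquiv Ξ).symm.toLinearEquiv (τ * ρ)) (φ y)
          = φ ((TensorProduct.congr (scaleVarEquiv Ξ).symm.toLinearEquiv τ) y) := by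
      intro y
      have h := hconj (φ y)
      rw [LinearEquiv.symm_apply_apply] at h
      exact h.symm
    apply Submodule.ext
    intro z
    rw [Submodule.mem_map]
    simp only [LinearMap.mem_ker, LinearMap.sub_apply, LinearMap.id_apply,
      LinearEquiv.coe_coe, LinearMap.coe_restrictScalars, sub_eq_zero]
    constructor
    · rintro ⟨y, hy, rfl⟩
      rw [hcomm2, hy]
    · intro hz
      refine ⟨φ.symm z, ?_, by simp⟩
      apply φ.injective
      rw [hconj z, hz, LinearEquiv.apply_symm_apply]


end LoopPaper
end
end
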